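/- arXiv:1703.07868 — 4 statements merged into one kernel-verified Lean document; each statement's English description precedes it below -/
import Mathlib

section
/- Let φ and ψ be continuous increasing functions on [0,∞) with φ(0)=ψ(0)=0, φ(t)→∞, and ψ/φ nondecreasing. Set a_n = φ(n), b_n = ψ(n). Let V_1,...,V_n be independent symmetric B-valued random variables. Then for all t ≥ 0, P(‖Σ_{i=1}^n V_i‖ > t b_n) ≤ 4 P(‖Σ_{i=1}^n φ(ψ⁻¹(‖V_i‖)) V_i/‖V_i‖‖ > t a_n) + Σ_{i=1}^n P(‖V_i‖ > b_n). -/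
open MeasureTheory ProbabilityTheory Set Filter

lemma abel_bound {E : Type*} [NormedAddCommGroup E] [NormedSpace ℝ E]
    {n : ℕ} (b : Fin n → ℝ) (z : Fin n → E)
    (hb : Antitone b) (hb0 : ∀ j, 0 ≤ b j) (hb1 : ∀ j, b j ≤ 1)
    {u : ℝ} (hu : 0 ≤ u)
    (hT : ∀ j : Fin n, ‖∑ m ∈ Finset.Iic j, z m‖ ≤ u) :
    ‖∑ j, b j • z j‖ ≤ u := by
  rcases Nat.eq_zero_or_pos n with hn | hn
  · subst hn; simpa using hu
  set bb : ℕ → ℝ := fun m => if h : m < n then b ⟨m, h⟩ else 0 with hbb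
  set zz : ℕ → E := fun m => if h : m < n then z ⟨m, h⟩ else 0 with hzz
  have hbbmono : Antitone bb := by
    intro i j hij
    simp only [hbb]
    split_ifs with h1 h2 h2
    · exact hb (Fin.mk_le_mk.mpr hij)
    · omega
    · exact hb0 _
    · exact le_rfl
  have hbb0 : ∀ m, 0 ≤ bb m := by
    intro m; simp only [hbb]; split_ifs; exacts [hb0 _, le_rfl]
  have hsum : ∑ j, b j • z j = ∑ i ∈ Finset.range n, bb i • zz i := by
    rw [← Fin.sum_univ_eq_sum_range (fun i => bb i • zz i) n]
    refine Finset.sum_congr rfl fun j _ => ?_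
    simp only [hbb, hzz, j.isLt, dif_pos, Fin.eta]
  have key : ∀ k, k ≤ n → ∑ i ∈ Finset.range k, zz i
      = ∑ m ∈ Finset.univ.filter (fun m : Fin n => (m : ℕ) < k), z m := by
    intro k
    induction k with
    | zero => intro _; simp
    | succ k ih =>
      intro hk
      have hkn : k < n := hk
      rw [Finset.sum_range_succ, ih (le_of_lt hkn)]
      have : Finset.univ.filter (fun m : Fin n => (m:ℕ) < k + 1)
          = insert (⟨k, hkn⟩ : Fin n) (Finset.univ.filter (fun m : Fin n => (m:ℕ) < k)) := by
        ext m
        simp only [Finset.mem_filter, Finset.mem_univ, true_and, Finset.mem_insert, Fin.ext_iff]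
        omega
      rw [this, Finset.sum_insert (by simp)]
      simp only [hzz, dif_pos hkn]
      exact (add_comm _ _)
  have hG : ∀ k, k ≤ n → ‖∑ i ∈ Finset.range k, zz i‖ ≤ u := by
    intro k hk
    rcases Nat.eq_zero_or_pos k with hk0 | hk0
    · subst hk0; simpa using hu
    have hk1 : k - 1 < n := by omega
    have hfilt : Finset.univ.filter (fun m : Fin n => (m:ℕ) < k)
        = Finset.Iic (⟨k - 1, hk1⟩ : Fin n) := by
      ext m
      simp only [Finset.mem_filter, Finset.mem_univ, true_and, Finset.mem_Iic, Fin.le_def]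
      omega
    rw [key k hk, hfilt]
    exact hT _
  rw [hsum, Finset.sum_range_by_parts]
  have hstep : ∀ i, bb (i+1) - bb i ≤ 0 := fun i => by
    have := hbbmono (Nat.le_succ i); linarith
  have h1 : ‖bb (n-1) • ∑ i ∈ Finset.range n, zz i‖ ≤ bb (n-1) * u := by
    rw [norm_smul, Real.norm_eq_abs, abs_of_nonneg (hbb0 _)]
    exact mul_le_mul_of_nonneg_left (hG n le_rfl) (hbb0 _)
  have h2 : ‖∑ i ∈ Finset.range (n-1), (bb (i+1) - bb i) • ∑ j ∈ Finset.range (i+1), zz j‖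
      ≤ ∑ i ∈ Finset.range (n-1), (bb i - bb (i+1)) * u := by
    refine (norm_sum_le _ _).trans (Finset.sum_le_sum fun i hi => ?_)
    rw [norm_smul, Real.norm_eq_abs, abs_of_nonpos (hstep i), neg_sub]
    have hi' : i + 1 ≤ n := by have := Finset.mem_range.1 hi; omega
    refine mul_le_mul_of_nonneg_left (hG (i+1) hi') ?_
    have := hstep i; linarith
  have htel : ∑ i ∈ Finset.range (n-1), (bb i - bb (i+1)) * u = (bb 0 - bb (n-1)) * u := by
    rw [← Finset.sum_mul, Finset.sum_range_sub' bb (n-1)]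
  calc ‖bb (n-1) • ∑ i ∈ Finset.range n, zz i -
        ∑ i ∈ Finset.range (n-1), (bb (i+1) - bb i) • ∑ j ∈ Finset.range (i+1), zz j‖
      ≤ ‖bb (n-1) • ∑ i ∈ Finset.range n, zz i‖ +
        ‖∑ i ∈ Finset.range (n-1), (bb (i+1) - bb i) • ∑ j ∈ Finset.range (i+1), zz j‖ :=
        norm_sub_le _ _
    _ ≤ bb (n-1) * u + (bb 0 - bb (n-1)) * u := by rw [← htel]; exact add_le_add h1 h2
    _ = bb 0 * u := by ring
    _ ≤ 1 * u := by
        refine mul_le_mul_of_nonneg_right ?_ hu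
        simp only [hbb, dif_pos hn]
        exact hb1 _
    _ = u := one_mul u


namespace Stmt4Aux

variable {E : Type*} [NormedAddCommGroup E]

def flipMap (n : ℕ) (ε : Fin n → Bool) (x : Fin n → E) : Fin n → E :=
  fun i => if ε i then -x i else x i

lemma flipMap_invol (n : ℕ) (ε : Fin n → Bool) (x : Fin n → E) :
    flipMap n ε (flipMap n ε x) = x := by
  funext i; by_cases h : ε i <;> simp [flipMap, h]

lemma flipMap_measurable {n : ℕ} [MeasurableSpace E] [BorelSpace E] (ε : Fin n → Bool) :
    Measurable (flipMap (E := E) n ε) := by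
  apply measurable_pi_lambda
  intro i
  by_cases h : ε i <;> simp only [flipMap, h, if_true, if_false]
  · exact (measurable_pi_apply i).neg
  · exact measurable_pi_apply i

def keyOf {n : ℕ} (v : Fin n → ℝ) : Fin n → Lex (ℝᵒᵈ × Fin n) :=
  fun i => toLex (OrderDual.toDual (v i), i)

lemma keyOf_lt_iff {n : ℕ} (v : Fin n → ℝ) (i i' : Fin n) :
    keyOf v i < keyOf v i' ↔ (v i' < v i ∨ (v i = v i' ∧ i < i')) := by
  rw [keyOf, keyOf, Prod.Lex.lt_iff]
  constructor
  · rintro (h | ⟨h1, h2⟩)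
    · exact Or.inl h
    · exact Or.inr ⟨(OrderDual.toDual_inj.mp h1), h2⟩
  · rintro (h | ⟨h1, h2⟩)
    · exact Or.inl h
    · exact Or.inr ⟨by rw [h1]; rfl, h2⟩

lemma keyOf_inj {n : ℕ} (v : Fin n → ℝ) : Function.Injective (keyOf v) := by
  intro i i' h
  have := congrArg (fun p => (ofLex p).2) h
  simpa [keyOf] using this

lemma exists_sort_perm {n : ℕ} (v : Fin n → ℝ) :
    ∃ σ : Equiv.Perm (Fin n), StrictMono fun j => keyOf v (σ j) := by
  refine ⟨Tuple.sort (keyOf v), ?_⟩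
  exact (Tuple.monotone_sort (keyOf v)).strictMono_of_injective
    ((keyOf_inj v).comp (Tuple.sort (keyOf v)).injective)

lemma sort_perm_unique {n : ℕ} (v : Fin n → ℝ) (σ τ : Equiv.Perm (Fin n))
    (hσ : StrictMono fun j => keyOf v (σ j)) (hτ : StrictMono fun j => keyOf v (τ j)) :
    σ = τ := by
  have hρ : StrictMono fun j => τ.symm (σ j) := by
    intro a b hab
    have h1 : keyOf v (τ (τ.symm (σ a))) < keyOf v (τ (τ.symm (σ b))) := by
      simpa [Equiv.apply_symm_apply] using hσ hab
    exact hτ.lt_iff_lt.mp h1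
  have hρid : (fun j => τ.symm (σ j)) = id := by
    have : WellFoundedLT (Fin n) := inferInstance
    refine (StrictMono.range_inj hρ (strictMono_id (α := Fin n))).mp ?_
    rw [Set.range_id]
    exact Set.range_eq_univ.mpr fun j => ⟨σ.symm (τ j), by simp⟩
  ext j
  have := congrFun hρid j
  simp only [id_eq] at this
  exact congrArg Fin.val ((Equiv.symm_apply_eq τ).mp this)

end Stmt4Aux

namespace Stmt4Aux

variable {E : Type*} [NormedAddCommGroup E] [NormedSpace ℝ E]
  [MeasurableSpace E] [BorelSpace E] [SecondCountableTopology E]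

def TT {n : ℕ} (h : E → E) (σ : Equiv.Perm (Fin n)) (j : Fin n) (x : Fin n → E) : E :=
  ∑ m ∈ Finset.Iic j, h (x (σ m))

def SS {n : ℕ} (h : E → E) (x : Fin n → E) : E := ∑ i, h (x i)

def AA {n : ℕ} (h : E → E) (c : (Fin n → E) → Fin n → ℝ) (u : ℝ)
    (σ : Equiv.Perm (Fin n)) (j : Fin n) : Set (Fin n → E) :=
  ({x | StrictMono fun m => keyOf (c x) (σ m)} ∩ {x | u < ‖TT h σ j x‖}) ∩
    {x | ∀ j' : Fin n, j' < j → ‖TT h σ j' x‖ ≤ u}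

lemma mem_AA {n : ℕ} {h : E → E} {c : (Fin n → E) → Fin n → ℝ} {u : ℝ}
    {σ : Equiv.Perm (Fin n)} {j : Fin n} {x : Fin n → E} :
    x ∈ AA h c u σ j ↔
      (StrictMono fun m => keyOf (c x) (σ m)) ∧ (u < ‖TT h σ j x‖) ∧
        (∀ j' : Fin n, j' < j → ‖TT h σ j' x‖ ≤ u) := by
  simp [AA, Set.mem_inter_iff, and_assoc]

lemma contraction_tail {n : ℕ} (μ : Measure (Fin n → E)) [IsProbabilityMeasure μ]
    (hflip : ∀ ε : Fin n → Bool, μ.map (flipMap n ε) = μ)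
    (h : E → E) (hh : Measurable h) (hodd : ∀ v : E, h (-v) = -h v)
    (c : (Fin n → E) → Fin n → ℝ) (hc : Measurable c)
    (hc0 : ∀ x i, 0 ≤ c x i) (hc1 : ∀ x i, c x i ≤ 1)
    (hcinv : ∀ (ε : Fin n → Bool) (x : Fin n → E), c (flipMap n ε x) = c x)
    (u : ℝ) (hu : 0 ≤ u) :
    μ {x | u < ‖∑ i, c x i • h (x i)‖} ≤ 2 * μ {x | u < ‖∑ i, h (x i)‖} := by
  classical
  set Sbig : Set (Fin n → E) := {x | u < ‖SS h x‖} with hSbig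
  have hSm : Measurable (SS (n := n) h) :=
    Finset.measurable_sum _ fun i _ => hh.comp (measurable_pi_apply i)
  have hTm : ∀ (σ : Equiv.Perm (Fin n)) (j : Fin n), Measurable (TT h σ j) := fun σ j =>
    Finset.measurable_sum _ fun m _ => hh.comp (measurable_pi_apply (σ m))
  have hSbigm : MeasurableSet Sbig := measurableSet_lt measurable_const hSm.norm
  have hcm : ∀ i, Measurable fun x : Fin n → E => c x i := fun i =>
    (measurable_pi_apply i).comp hc
  have hAmeas : ∀ (σ : Equiv.Perm (Fin n)) (j : Fin n), MeasurableSet (AA h c u σ j) := by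
    intro σ j
    have hBm : MeasurableSet {x : Fin n → E | StrictMono fun m => keyOf (c x) (σ m)} := by
      have heq : {x : Fin n → E | StrictMono fun m => keyOf (c x) (σ m)} =
          ⋂ (p : Fin n × Fin n), ⋂ (_ : p.1 < p.2),
            ({x : Fin n → E | c x (σ p.2) < c x (σ p.1)} ∪
              ({x : Fin n → E | c x (σ p.1) = c x (σ p.2)} ∩ {_x : Fin n → E | σ p.1 < σ p.2})) := by
        ext x
        simp only [mem_setOf_eq, mem_iInter, mem_union, mem_inter_iff]
        constructor
        · intro hs p hp
          have h2 := hs hp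
          rw [keyOf_lt_iff] at h2
          exact h2
        · intro hs a b hab
          rw [keyOf_lt_iff]
          exact hs (a, b) hab
      rw [heq]
      refine MeasurableSet.iInter fun p => MeasurableSet.iInter fun _ => ?_
      refine (measurableSet_lt (hcm _) (hcm _)).union
        ((measurableSet_eq_fun (hcm _) (hcm _)).inter ?_)
      by_cases hp : σ p.1 < σ p.2
      · simp only [hp, setOf_true]; exact MeasurableSet.univ
      · simp only [hp, setOf_false]; exact MeasurableSet.empty
    refine (hBm.inter (measurableSet_lt measurable_const (hTm σ j).norm)).inter ?_
    have : {x : Fin n → E | ∀ j' : Fin n, j' < j → ‖TT h σ j' x‖ ≤ u} =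
        ⋂ (j' : Fin n), ⋂ (_ : j' < j), {x : Fin n → E | ‖TT h σ j' x‖ ≤ u} := by
      ext x; simp [mem_iInter]
    rw [this]
    exact MeasurableSet.iInter fun j' => MeasurableSet.iInter fun _ =>
      measurableSet_le (hTm σ j').norm measurable_const
  -- cover
  have hcover : {x | u < ‖∑ i, c x i • h (x i)‖} ⊆
      ⋃ p : Equiv.Perm (Fin n) × Fin n, AA h c u p.1 p.2 := by
    intro x hx
    obtain ⟨σ, hσ⟩ := exists_sort_perm (c x)
    have hex : ∃ j : Fin n, u < ‖TT h σ j x‖ := by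
      by_contra hno
      push_neg at hno
      have hb : Antitone fun j => c x (σ j) := by
        intro a b hab
        rcases eq_or_lt_of_le hab with rfl | hlt
        · exact le_rfl
        · have h2 := hσ hlt
          rw [keyOf_lt_iff] at h2
          rcases h2 with h1 | ⟨h1, _⟩
          · exact le_of_lt h1
          · exact le_of_eq h1.symm
      have habel : ‖∑ j, c x (σ j) • h (x (σ j))‖ ≤ u :=
        abel_bound _ _ hb (fun j => hc0 x _) (fun j => hc1 x _) hu (fun j => hno j)
      have hre : (∑ i, c x i • h (x i)) = ∑ j, c x (σ j) • h (x (σ j)) :=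
        (Equiv.sum_comp σ fun i => c x i • h (x i)).symm
      rw [mem_setOf_eq, hre] at hx
      exact absurd hx (not_lt.mpr habel)
    set s : Finset (Fin n) := Finset.univ.filter fun j => u < ‖TT h σ j x‖ with hsdef
    have hs : s.Nonempty := by
      obtain ⟨j, hj⟩ := hex
      exact ⟨j, by simp [hsdef, hj]⟩
    refine mem_iUnion.mpr ⟨(σ, s.min' hs), mem_AA.mpr ⟨hσ, ?_, ?_⟩⟩
    · have := s.min'_mem hs
      simpa [hsdef] using this
    · intro j' hj'
      by_contra hgt
      push_neg at hgt
      have hj's : j' ∈ s := by simp [hsdef, hgt]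
      exact absurd hj' (not_lt.mpr (s.min'_le j' hj's))
  -- disjointness
  have hdisj : Pairwise (Function.onFun Disjoint
      fun p : Equiv.Perm (Fin n) × Fin n => AA h c u p.1 p.2) := by
    rintro ⟨σ, j⟩ ⟨σ', j'⟩ hne
    refine Set.disjoint_left.mpr fun x hx hx' => ?_
    obtain ⟨hB, hTj, hmin⟩ := mem_AA.mp hx
    obtain ⟨hB', hTj', hmin'⟩ := mem_AA.mp hx'
    have hσeq : σ = σ' := sort_perm_unique (c x) σ σ' hB hB'
    subst hσeq
    have hjeq : j = j' := by
      rcases lt_trichotomy j j' with hlt | heq | hgt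
      · exact absurd hTj (not_lt.mpr (hmin' j hlt))
      · exact heq
      · exact absurd hTj' (not_lt.mpr (hmin j' hgt))
    exact hne (by rw [hjeq])
  -- per-piece bound
  have hpiece : ∀ (σ : Equiv.Perm (Fin n)) (j : Fin n),
      μ (AA h c u σ j) ≤ 2 * μ (AA h c u σ j ∩ Sbig) := by
    intro σ j
    set ε : Fin n → Bool := fun i => decide (j < σ.symm i) with hε
    set F := flipMap (E := E) n ε with hFdef
    have hFm : Measurable F := flipMap_measurable ε
    have hFapp : ∀ (x : Fin n → E) (m : Fin n),
        F x (σ m) = if j < m then -(x (σ m)) else x (σ m) := by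
      intro x m
      simp only [hFdef, flipMap, hε, Equiv.symm_apply_apply]
      by_cases hm : j < m <;> simp [hm]
    have hcF : ∀ x, c (F x) = c x := fun x => hcinv ε x
    have hTF : ∀ (x : Fin n → E) (j' : Fin n), j' ≤ j → TT h σ j' (F x) = TT h σ j' x := by
      intro x j' hj'
      unfold TT
      refine Finset.sum_congr rfl fun m hm => ?_
      rw [hFapp, if_neg (not_lt.mpr ((Finset.mem_Iic.mp hm).trans hj'))]
    have hAinv : ∀ x, F x ∈ AA h c u σ j ↔ x ∈ AA h c u σ j := by
      intro x
      rw [mem_AA, mem_AA, hcF x, hTF x j le_rfl]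
      constructor
      · rintro ⟨h1, h2, h3⟩
        exact ⟨h1, h2, fun j' hj' => by rw [← hTF x j' (le_of_lt hj')]; exact h3 j' hj'⟩
      · rintro ⟨h1, h2, h3⟩
        exact ⟨h1, h2, fun j' hj' => by rw [hTF x j' (le_of_lt hj')]; exact h3 j' hj'⟩
    have hApre : F ⁻¹' (AA h c u σ j) = AA h c u σ j := by
      ext x; simp only [mem_preimage]; exact hAinv x
    have hSF : ∀ x, SS h (F x) = (2:ℝ) • TT h σ j x - SS h x := by
      intro x
      have h1 : SS h (F x) = ∑ m, h (F x (σ m)) :=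
        (Equiv.sum_comp σ fun i => h ((F x) i)).symm
      have h2 : SS h x = ∑ m, h (x (σ m)) :=
        (Equiv.sum_comp σ fun i => h (x i)).symm
      have h3 : ∀ m, h (F x (σ m)) = if j < m then -h (x (σ m)) else h (x (σ m)) := by
        intro m; rw [hFapp]; by_cases hm : j < m <;> simp [hm, hodd]
      rw [h1, h2]
      calc (∑ m, h (F x (σ m)))
          = ∑ m ∈ Finset.Iic j, h (F x (σ m)) + ∑ m ∈ (Finset.Iic j)ᶜ, h (F x (σ m)) :=
            (Finset.sum_add_sum_compl _ _).symm
        _ = ∑ m ∈ Finset.Iic j, h (x (σ m)) + ∑ m ∈ (Finset.Iic j)ᶜ, (-h (x (σ m))) := by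
            congr 1
            · exact Finset.sum_congr rfl fun m hm => by
                rw [h3, if_neg (not_lt.mpr (Finset.mem_Iic.mp hm))]
            · exact Finset.sum_congr rfl fun m hm => by
                rw [h3, if_pos (by simpa [Finset.mem_compl, Finset.mem_Iic] using hm)]
        _ = (2:ℝ) • TT h σ j x - ∑ m, h (x (σ m)) := by
            simp only [TT, two_smul]
            rw [Finset.sum_neg_distrib,
              ← Finset.sum_add_sum_compl (Finset.Iic j) (fun m => h (x (σ m)))]
            abel
    have hkey : ∀ x ∈ AA h c u σ j, x ∈ Sbig ∨ F x ∈ Sbig := by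
      intro x hx
      obtain ⟨hB, hTj, hmin⟩ := mem_AA.mp hx
      by_contra hcon
      push_neg at hcon
      obtain ⟨hc1', hc2'⟩ := hcon
      rw [hSbig, mem_setOf_eq, not_lt] at hc1' hc2'
      have hnorm : 2 * ‖TT h σ j x‖ ≤ 2 * u := by
        calc 2 * ‖TT h σ j x‖ = ‖(2:ℝ) • TT h σ j x‖ := by
              rw [norm_smul]; simp
          _ = ‖SS h x + SS h (F x)‖ := by rw [hSF]; congr 1; abel
          _ ≤ ‖SS h x‖ + ‖SS h (F x)‖ := norm_add_le _ _
          _ ≤ u + u := add_le_add hc1' hc2'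
          _ = 2 * u := by ring
      have : ‖TT h σ j x‖ ≤ u := by linarith
      exact absurd hTj (not_lt.mpr this)
    have hsub : AA h c u σ j ⊆ (AA h c u σ j ∩ Sbig) ∪ (AA h c u σ j ∩ F ⁻¹' Sbig) := by
      intro x hx
      rcases hkey x hx with h1 | h1
      · exact Or.inl ⟨hx, h1⟩
      · exact Or.inr ⟨hx, h1⟩
    calc μ (AA h c u σ j) ≤ μ ((AA h c u σ j ∩ Sbig) ∪ (AA h c u σ j ∩ F ⁻¹' Sbig)) :=
          measure_mono hsub
      _ ≤ μ (AA h c u σ j ∩ Sbig) + μ (AA h c u σ j ∩ F ⁻¹' Sbig) := measure_union_le _ _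
      _ = μ (AA h c u σ j ∩ Sbig) + μ (F ⁻¹' (AA h c u σ j ∩ Sbig)) := by
          rw [Set.preimage_inter, hApre]
      _ = μ (AA h c u σ j ∩ Sbig) + (μ.map F) (AA h c u σ j ∩ Sbig) := by
          rw [Measure.map_apply hFm ((hAmeas σ j).inter hSbigm)]
      _ = μ (AA h c u σ j ∩ Sbig) + μ (AA h c u σ j ∩ Sbig) := by rw [hFdef, hflip ε]
      _ = 2 * μ (AA h c u σ j ∩ Sbig) := (two_mul _).symm
  -- final assembly
  have hdisj2 : Pairwise (Function.onFun Disjoint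
      fun p : Equiv.Perm (Fin n) × Fin n => AA h c u p.1 p.2 ∩ Sbig) :=
    fun p q hpq => ((hdisj hpq).mono inter_subset_left inter_subset_left)
  calc μ {x | u < ‖∑ i, c x i • h (x i)‖}
      ≤ μ (⋃ p : Equiv.Perm (Fin n) × Fin n, AA h c u p.1 p.2) := measure_mono hcover
    _ ≤ ∑' p : Equiv.Perm (Fin n) × Fin n, μ (AA h c u p.1 p.2) := measure_iUnion_le _
    _ ≤ ∑' p : Equiv.Perm (Fin n) × Fin n, 2 * μ (AA h c u p.1 p.2 ∩ Sbig) :=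
        ENNReal.tsum_le_tsum fun p => hpiece p.1 p.2
    _ = 2 * ∑' p : Equiv.Perm (Fin n) × Fin n, μ (AA h c u p.1 p.2 ∩ Sbig) :=
        ENNReal.tsum_mul_left
    _ = 2 * μ (⋃ p : Equiv.Perm (Fin n) × Fin n, (AA h c u p.1 p.2 ∩ Sbig)) := by
        rw [measure_iUnion hdisj2 fun p => (hAmeas p.1 p.2).inter hSbigm]
    _ ≤ 2 * μ Sbig := by
        refine mul_le_mul_right (measure_mono (iUnion_subset fun p => inter_subset_right)) 2

end Stmt4Aux

open Stmt4Aux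

/-- Theorem 1.1 (ii): for independent symmetric B-valued V₁,...,Vₙ,
P(‖Σ Vᵢ‖ > t bₙ) ≤ 4 P(‖Σ φ(ψ⁻¹(‖Vᵢ‖)) Vᵢ/‖Vᵢ‖‖ > t aₙ) + Σ P(‖Vᵢ‖ > bₙ),
where aₙ = φ(n), bₙ = ψ(n). -/
theorem stmt4 {Ω : Type*} [MeasurableSpace Ω] (P : Measure Ω) [IsProbabilityMeasure P]
    {E : Type*} [NormedAddCommGroup E] [NormedSpace ℝ E] [CompleteSpace E]
    [SecondCountableTopology E] [MeasurableSpace E] [BorelSpace E]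
    (φ ψ ψinv : ℝ → ℝ)
    (hφc : ContinuousOn φ (Ici 0)) (hφm : StrictMonoOn φ (Ici 0)) (hφ0 : φ 0 = 0)
    (hψc : ContinuousOn ψ (Ici 0)) (hψm : StrictMonoOn ψ (Ici 0)) (hψ0 : ψ 0 = 0)
    (hφtop : Tendsto φ atTop atTop)
    (hratio : ∀ s t : ℝ, 0 < s → s ≤ t → ψ s / φ s ≤ ψ t / φ t)
    (hinv : ∀ s : ℝ, 0 ≤ s → ψinv (ψ s) = s)
    (n : ℕ) (hn : 1 ≤ n) (V : Fin n → Ω → E)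
    (hmeas : ∀ i, Measurable (V i))
    (hindep : iIndepFun V P)
    (hsymm : ∀ i, Measure.map (fun ω => -(V i ω)) P = Measure.map (V i) P) :
    ∀ t : ℝ, 0 ≤ t →
      P {ω | t * ψ n < ‖∑ i, V i ω‖} ≤
        4 * P {ω | t * φ n < ‖∑ i, φ (ψinv ‖V i ω‖) • ‖V i ω‖⁻¹ • V i ω‖} +
          ∑ i, P {ω | ψ n < ‖V i ω‖} := by
  classical
  intro t ht
  -- basic positivity facts
  have hn1 : (1:ℝ) ≤ (n:ℝ) := by exact_mod_cast hn
  have hnpos : (0:ℝ) < (n:ℝ) := lt_of_lt_of_le one_pos hn1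
  have hφn : 0 < φ n := by
    have := hφm (le_refl (0:ℝ)) (le_of_lt hnpos) hnpos
    rwa [hφ0] at this
  have hψn : 0 < ψ n := by
    have := hψm (le_refl (0:ℝ)) (le_of_lt hnpos) hnpos
    rwa [hψ0] at this
  have hφ1 : 0 < φ 1 := by
    have := hφm (le_refl (0:ℝ)) (show (0:ℝ) ≤ 1 from zero_le_one) one_pos
    rwa [hφ0] at this
  have hψ1 : 0 < ψ 1 := by
    have := hψm (le_refl (0:ℝ)) (show (0:ℝ) ≤ 1 from zero_le_one) one_pos
    rwa [hψ0] at this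
  -- surjectivity of ψ onto [0, ∞)
  have hψsurj : ∀ r : ℝ, 0 ≤ r → ∃ s, 0 ≤ s ∧ ψ s = r := by
    intro r hr
    obtain ⟨t₁, ht₁⟩ := ((hφtop.eventually_ge_atTop (r * φ 1 / ψ 1)).and
      (eventually_ge_atTop (1:ℝ))).exists
    obtain ⟨hφt₁, ht₁1⟩ := ht₁
    have ht₁0 : (0:ℝ) ≤ t₁ := le_trans zero_le_one ht₁1
    have hφt₁pos : 0 < φ t₁ := by
      have := hφm (le_refl (0:ℝ)) ht₁0 (lt_of_lt_of_le one_pos ht₁1)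
      rwa [hφ0] at this
    have hrle : r ≤ ψ t₁ := by
      have h1 : ψ 1 / φ 1 ≤ ψ t₁ / φ t₁ := hratio 1 t₁ one_pos ht₁1
      have h2 : ψ 1 * φ t₁ ≤ ψ t₁ * φ 1 := (div_le_div_iff₀ hφ1 hφt₁pos).mp h1
      have h3 : r * φ 1 ≤ φ t₁ * ψ 1 := by
        have := (div_le_iff₀ hψ1).mp hφt₁
        linarith
      have h4 : r * φ 1 ≤ ψ t₁ * φ 1 := by nlinarith
      exact le_of_mul_le_mul_right h4 hφ1
    have hmem : r ∈ Icc (ψ 0) (ψ t₁) := by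
      constructor
      · rwa [hψ0]
      · exact hrle
    have := intermediate_value_Icc ht₁0 (hψc.mono (fun y hy => hy.1))
    obtain ⟨s, hs, hψs⟩ := this hmem
    exact ⟨s, hs.1, hψs⟩
  have hψinv : ∀ r : ℝ, 0 ≤ r → 0 ≤ ψinv r ∧ ψ (ψinv r) = r := by
    intro r hr
    obtain ⟨s, hs0, hψs⟩ := hψsurj r hr
    have : ψinv r = s := by rw [← hψs, hinv s hs0]
    rw [this, hψs]
    exact ⟨hs0, rfl⟩
  -- the function G
  set G : ℝ → ℝ := fun r => φ (ψinv (max r 0)) with hGdef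
  have hG0 : ∀ r : ℝ, 0 ≤ r → G r = φ (ψinv r) := by
    intro r hr; rw [hGdef]; simp only [max_eq_left hr]
  have hGmono : Monotone G := by
    intro r r' hrr'
    simp only [hGdef]
    have ha : (0:ℝ) ≤ max r 0 := le_max_right r 0
    have ha' : (0:ℝ) ≤ max r' 0 := le_max_right r' 0
    obtain ⟨hs0, hψs⟩ := hψinv _ ha
    obtain ⟨hs0', hψs'⟩ := hψinv _ ha'
    have hle : ψinv (max r 0) ≤ ψinv (max r' 0) := by
      by_contra hlt
      push_neg at hlt
      have := hψm hs0' hs0 hlt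
      rw [hψs, hψs'] at this
      exact absurd (max_le_max hrr' (le_refl 0)) (not_le.mpr this)
    exact hφm.monotoneOn hs0 hs0' hle
  have hGmeas : Measurable G := hGmono.measurable
  have hGnonneg : ∀ r, 0 ≤ G r := by
    intro r
    simp only [hGdef]
    obtain ⟨hs0, _⟩ := hψinv _ (le_max_right r 0)
    have := hφm.monotoneOn (le_refl (0:ℝ)) hs0 hs0
    rwa [hφ0] at this
  have hGpos : ∀ r, 0 < r → 0 < G r := by
    intro r hr
    rw [hG0 r (le_of_lt hr)]
    obtain ⟨hs0, hψs⟩ := hψinv r (le_of_lt hr)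
    have hspos : 0 < ψinv r := by
      rcases eq_or_lt_of_le hs0 with heq | hlt
      · exfalso; rw [← heq] at hψs; rw [hψ0] at hψs; exact absurd hψs.symm (ne_of_gt hr)
      · exact hlt
    have := hφm (le_refl (0:ℝ)) hs0 hspos
    rwa [hφ0] at this
  -- the map h
  set h : E → E := fun v => G ‖v‖ • ‖v‖⁻¹ • v with hhdef
  have hh : Measurable h :=
    ((hGmeas.comp measurable_norm).smul (measurable_norm.inv.smul measurable_id))
  have hodd : ∀ v : E, h (-v) = -h v := by
    intro v; simp only [hhdef, norm_neg, smul_neg]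
  have hhV : ∀ v : E, h v = φ (ψinv ‖v‖) • ‖v‖⁻¹ • v := by
    intro v; rw [hhdef]; simp only [hG0 ‖v‖ (norm_nonneg v)]
  -- the coefficient function c
  set f : ℝ → ℝ := fun r => if r ≤ ψ n then (φ n / ψ n) * (r * (G r)⁻¹) else 0 with hfdef
  have hfm : Measurable f :=
    Measurable.ite (measurableSet_le measurable_id measurable_const)
      (measurable_const.mul (measurable_id.mul hGmeas.inv)) measurable_const
  set c : (Fin n → E) → Fin n → ℝ := fun x i => f ‖x i‖ with hcdef
  have hc : Measurable c :=
    measurable_pi_lambda _ fun i => hfm.comp (measurable_pi_apply i).norm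
  have hf0 : ∀ r, 0 ≤ r → 0 ≤ f r := by
    intro r hr
    simp only [hfdef]
    split_ifs
    · have : (0:ℝ) ≤ (G r)⁻¹ := inv_nonneg.mpr (hGnonneg r)
      positivity
    · exact le_rfl
  have hf1 : ∀ r, 0 ≤ r → f r ≤ 1 := by
    intro r hr
    simp only [hfdef]
    split_ifs with hcase
    · rcases eq_or_lt_of_le hr with heq | hpos
      · rw [← heq]; simp
      · have hGr : 0 < G r := hGpos r hpos
        obtain ⟨hs0, hψs⟩ := hψinv r (le_of_lt hpos)
        have hspos : 0 < ψinv r := by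
          rcases eq_or_lt_of_le hs0 with heq2 | hlt
          · exfalso; rw [← heq2] at hψs; rw [hψ0] at hψs; exact absurd hψs.symm (ne_of_gt hpos)
          · exact hlt
        have hsn : ψinv r ≤ (n:ℝ) := by
          by_contra hgt
          push_neg at hgt
          have := hψm (le_of_lt hnpos) hs0 hgt
          rw [hψs] at this
          exact absurd hcase (not_le.mpr this)
        have hrat := hratio (ψinv r) n hspos hsn
        have hGreq : G r = φ (ψinv r) := hG0 r (le_of_lt hpos)
        rw [hGreq]
        have hφs : 0 < φ (ψinv r) := by
          have := hφm (le_refl (0:ℝ)) hs0 hspos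
          rwa [hφ0] at this
        have : r * (φ (ψinv r))⁻¹ = ψ (ψinv r) / φ (ψinv r) := by
          rw [hψs]; ring
        rw [this]
        calc φ n / ψ n * (ψ (ψinv r) / φ (ψinv r)) ≤ φ n / ψ n * (ψ n / φ n) := by
              refine mul_le_mul_of_nonneg_left hrat ?_
              positivity
          _ = 1 := by field_simp
    · exact zero_le_one
  have hc0 : ∀ x i, 0 ≤ c x i := fun x i => hf0 _ (norm_nonneg _)
  have hc1 : ∀ x i, c x i ≤ 1 := fun x i => hf1 _ (norm_nonneg _)
  have hcinv : ∀ (ε : Fin n → Bool) (x : Fin n → E), c (flipMap n ε x) = c x := by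
    intro ε x
    funext i
    simp only [hcdef, flipMap]
    by_cases hε : ε i <;> simp [hε]
  -- joint distribution
  set J : Ω → (Fin n → E) := fun ω i => V i ω with hJdef
  have hJ : Measurable J := measurable_pi_lambda _ hmeas
  set μ : Measure (Fin n → E) := P.map J with hμdef
  have : IsProbabilityMeasure μ := Measure.isProbabilityMeasure_map hJ.aemeasurable
  set ν : Fin n → Measure E := fun i => P.map (V i) with hνdef
  have hνprob : ∀ i, IsProbabilityMeasure (ν i) := fun i =>
    Measure.isProbabilityMeasure_map (hmeas i).aemeasurable
  have hνsymm : ∀ i, (ν i).map (fun v => -v) = ν i := by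
    intro i
    rw [hνdef]
    rw [Measure.map_map measurable_neg (hmeas i)]
    exact hsymm i
  haveI := hνprob
  have hμpi : μ = Measure.pi ν := by
    refine (Measure.pi_eq fun s hs => ?_).symm
    rw [hμdef, Measure.map_apply hJ (MeasurableSet.univ_pi hs)]
    have hpre : J ⁻¹' (Set.pi univ s) = ⋂ i, V i ⁻¹' s i := by
      ext ω
      simp [hJdef, Set.mem_pi]
    rw [hpre]
    have hint := hindep.measure_inter_preimage_eq_mul Finset.univ (sets := s)
      (fun i _ => hs i)
    have hib : (⋂ i ∈ Finset.univ, V i ⁻¹' s i) = ⋂ i, V i ⁻¹' s i := by simp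
    rw [hib] at hint
    rw [hint]
    refine Finset.prod_congr rfl fun i _ => ?_
    rw [hνdef, Measure.map_apply (hmeas i) (hs i)]
  have hflip : ∀ ε : Fin n → Bool, μ.map (flipMap n ε) = μ := by
    intro ε
    rw [hμpi]
    refine (Measure.pi_eq fun s hs => ?_).symm
    rw [Measure.map_apply (flipMap_measurable ε) (MeasurableSet.univ_pi hs)]
    have hpre : flipMap n ε ⁻¹' (Set.pi univ s) =
        Set.pi univ (fun i => if ε i then (fun v : E => -v) ⁻¹' (s i) else s i) := by
      ext x
      simp only [mem_preimage, Set.mem_pi, mem_univ, forall_true_left, flipMap]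
      refine forall_congr' fun i => ?_
      by_cases hε : ε i <;> simp [hε]
    rw [hpre, Measure.pi_pi]
    refine Finset.prod_congr rfl fun i _ => ?_
    by_cases hε : ε i
    · simp only [hε, if_true]
      rw [← Measure.map_apply measurable_neg (hs i), hνsymm i]
    · simp [hε]
  -- sets on the product space
  set Bigset : Set (Fin n → E) := {x | t * ψ n < ‖∑ i, x i‖} with hBigdef
  have hBigmeas : MeasurableSet Bigset :=
    measurableSet_lt measurable_const
      (Finset.measurable_sum _ fun i _ => measurable_pi_apply i).norm
  set Wset : Set (Fin n → E) := {x | t * φ n < ‖∑ i, h (x i)‖} with hWdef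
  have hWmeas : MeasurableSet Wset :=
    measurableSet_lt measurable_const
      (Finset.measurable_sum _ fun i _ => hh.comp (measurable_pi_apply i)).norm
  set Badset : Fin n → Set (Fin n → E) := fun i => {x | ψ n < ‖x i‖} with hBaddef
  have hBadmeas : ∀ i, MeasurableSet (Badset i) := fun i =>
    measurableSet_lt measurable_const (measurable_pi_apply i).norm
  set Goodset : Set (Fin n → E) := {x | ∀ i, ‖x i‖ ≤ ψ n} with hGooddef
  -- transfers
  have hPBig : P {ω | t * ψ n < ‖∑ i, V i ω‖} = μ Bigset := by
    rw [hμdef, Measure.map_apply hJ hBigmeas]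
    congr 1
  have hPW : P {ω | t * φ n < ‖∑ i, φ (ψinv ‖V i ω‖) • ‖V i ω‖⁻¹ • V i ω‖} = μ Wset := by
    rw [hμdef, Measure.map_apply hJ hWmeas]
    congr 1
    ext ω
    simp [hWdef, hhV, hJdef]
  have hPBad : ∀ i, μ (Badset i) = P {ω | ψ n < ‖V i ω‖} := by
    intro i
    rw [hμdef, Measure.map_apply hJ (hBadmeas i)]
    congr 1
  -- inclusion 1
  have hincl1 : Bigset ⊆ (Bigset ∩ Goodset) ∪ ⋃ i, Badset i := by
    intro x hx
    by_cases hg : ∀ i, ‖x i‖ ≤ ψ n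
    · exact Or.inl ⟨hx, hg⟩
    · push_neg at hg
      obtain ⟨i, hi⟩ := hg
      exact Or.inr (mem_iUnion.mpr ⟨i, hi⟩)
  -- inclusion 2
  have hincl2 : Bigset ∩ Goodset ⊆ {x | t * φ n < ‖∑ i, c x i • h (x i)‖} := by
    rintro x ⟨hxB, hxG⟩
    have hterm : ∀ i, c x i • h (x i) = (φ n / ψ n) • x i := by
      intro i
      have hle : ‖x i‖ ≤ ψ n := hxG i
      simp only [hcdef, hfdef, if_pos hle, hhdef]
      rcases eq_or_lt_of_le (norm_nonneg (x i)) with heq | hpos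
      · have hx0 : x i = 0 := norm_eq_zero.mp heq.symm
        rw [hx0]
        simp
      · have hGr : 0 < G ‖x i‖ := hGpos _ hpos
        rw [smul_smul, smul_smul]
        congr 1
        field_simp
    rw [mem_setOf_eq]
    have : ∑ i, c x i • h (x i) = (φ n / ψ n) • ∑ i, x i := by
      rw [Finset.smul_sum]
      exact Finset.sum_congr rfl fun i _ => hterm i
    rw [this, norm_smul, Real.norm_eq_abs, abs_of_pos (by positivity)]
    have h1 : t * ψ n < ‖∑ i, x i‖ := hxB
    calc t * φ n = (φ n / ψ n) * (t * ψ n) := by field_simp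
      _ < (φ n / ψ n) * ‖∑ i, x i‖ := by
          exact mul_lt_mul_of_pos_left h1 (by positivity)
  -- main chain
  rw [hPBig]
  have hchain1 : μ Bigset ≤ μ (Bigset ∩ Goodset) + ∑ i, μ (Badset i) := by
    calc μ Bigset ≤ μ ((Bigset ∩ Goodset) ∪ ⋃ i, Badset i) := measure_mono hincl1
      _ ≤ μ (Bigset ∩ Goodset) + μ (⋃ i, Badset i) := measure_union_le _ _
      _ ≤ μ (Bigset ∩ Goodset) + ∑ i, μ (Badset i) := by
          refine add_le_add_right ?_ _
          exact measure_iUnion_fintype_le _ _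
  have hchain2 : μ (Bigset ∩ Goodset) ≤ 2 * μ Wset := by
    calc μ (Bigset ∩ Goodset) ≤ μ {x | t * φ n < ‖∑ i, c x i • h (x i)‖} :=
          measure_mono hincl2
      _ ≤ 2 * μ {x | t * φ n < ‖∑ i, h (x i)‖} :=
          contraction_tail μ hflip h hh hodd c hc hc0 hc1 hcinv (t * φ n)
            (by positivity)
      _ = 2 * μ Wset := rfl
  calc μ Bigset ≤ μ (Bigset ∩ Goodset) + ∑ i, μ (Badset i) := hchain1
    _ ≤ 2 * μ Wset + ∑ i, μ (Badset i) := add_le_add_left hchain2 _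
    _ ≤ 4 * μ Wset + ∑ i, μ (Badset i) := by
        refine add_le_add_left (mul_le_mul_left (by norm_num : (2:ENNReal) ≤ 4) _) _
    _ = 4 * P {ω | t * φ n < ‖∑ i, φ (ψinv ‖V i ω‖) • ‖V i ω‖⁻¹ • V i ω‖} +
          ∑ i, P {ω | ψ n < ‖V i ω‖} := by
        rw [hPW]
        congr 1
        exact Finset.sum_congr rfl fun i _ => hPBad i
end

section
/- Let T_1,...,T_n be independent symmetric B-valued random variables and let a > 0. Then for all t ≥ 0, P(‖Σ_{i=1}^n T_i·1{‖T_i‖ ≤ a}‖ > t) ≤ 2 P(‖Σ_{i=1}^n T_i‖ > t). -/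
open MeasureTheory ProbabilityTheory Set Filter

/-- Joint law of an independent tuple is the product of marginals. -/
lemma map_tuple_eq_pi {Ω : Type*} [MeasurableSpace Ω] (P : Measure Ω) [IsProbabilityMeasure P]
    {E : Type*} [MeasurableSpace E] (n : ℕ) (T : Fin n → Ω → E)
    (hmeas : ∀ i, Measurable (T i))
    (hindep : iIndepFun T P) :
    Measure.map (fun ω i => T i ω) P = Measure.pi (fun i => Measure.map (T i) P) := by
  haveI : ∀ i, IsProbabilityMeasure (Measure.map (T i) P) :=
    fun i => Measure.isProbabilityMeasure_map (hmeas i).aemeasurable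
  refine (Measure.pi_eq fun s hs => ?_).symm
  rw [Measure.map_apply (measurable_pi_lambda _ hmeas) (MeasurableSet.univ_pi hs)]
  have hpre : (fun ω i => T i ω) ⁻¹' (Set.pi Set.univ s) = ⋂ i ∈ Finset.univ, T i ⁻¹' s i := by
    ext ω; simp [Set.mem_pi]
  rw [hpre, hindep.measure_inter_preimage_eq_mul Finset.univ (fun i _ => hs i)]
  exact Finset.prod_congr rfl fun i _ => (Measure.map_apply (hmeas i) (hs i)).symm

/-- For independent symmetric T₁,...,Tₙ and a > 0,
P(‖Σ Tᵢ 1{‖Tᵢ‖≤a}‖ > t) ≤ 2 P(‖Σ Tᵢ‖ > t). -/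
theorem stmt6 {Ω : Type*} [MeasurableSpace Ω] (P : Measure Ω) [IsProbabilityMeasure P]
    {E : Type*} [NormedAddCommGroup E] [NormedSpace ℝ E] [CompleteSpace E]
    [SecondCountableTopology E] [MeasurableSpace E] [BorelSpace E]
    (n : ℕ) (T : Fin n → Ω → E) (a : ℝ) (ha : 0 < a)
    (hmeas : ∀ i, Measurable (T i))
    (hindep : iIndepFun T P)
    (hsymm : ∀ i, Measure.map (fun ω => -(T i ω)) P = Measure.map (T i) P) :
    ∀ t : ℝ, 0 ≤ t →
      P {ω | t < ‖∑ i, if ‖T i ω‖ ≤ a then T i ω else 0‖} ≤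
        2 * P {ω | t < ‖∑ i, T i ω‖} := by
  intro t ht
  -- the flipping map
  set f : E → E := fun x => if ‖x‖ ≤ a then x else -x with hf
  have hfmeas : Measurable f := by
    apply Measurable.ite _ measurable_id measurable_neg
    exact measurableSet_le measurable_norm measurable_const
  -- each f ∘ T i has the same law as T i
  have hmarg : ∀ i, Measure.map (f ∘ T i) P = Measure.map (T i) P := by
    intro i
    ext A hA
    rw [Measure.map_apply (hfmeas.comp (hmeas i)) hA, Measure.map_apply (hmeas i) hA]
    set Bl : Set E := {x | ‖x‖ ≤ a} with hBl
    have hBlm : MeasurableSet Bl := measurableSet_le measurable_norm measurable_const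
    have hsplit : (f ∘ T i) ⁻¹' A
        = (T i ⁻¹' (A ∩ Bl)) ∪ (T i ⁻¹' ((-A) ∩ Blᶜ)) := by
      ext ω
      by_cases h : ‖T i ω‖ ≤ a <;>
        simp [hf, h, Bl, Set.mem_neg, Set.mem_preimage, Set.mem_inter_iff]
    have hsplit2 : T i ⁻¹' A = (T i ⁻¹' (A ∩ Bl)) ∪ (T i ⁻¹' (A ∩ Blᶜ)) := by
      rw [← Set.preimage_union, ← Set.inter_union_distrib_left, Set.union_compl_self,
        Set.inter_univ]
    have hdisj : Disjoint (T i ⁻¹' (A ∩ Bl)) (T i ⁻¹' ((-A) ∩ Blᶜ)) := by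
      apply Set.disjoint_left.mpr
      intro ω h1 h2
      exact (h2.2 : _) h1.2
    have hdisj2 : Disjoint (T i ⁻¹' (A ∩ Bl)) (T i ⁻¹' (A ∩ Blᶜ)) := by
      apply Set.disjoint_left.mpr
      intro ω h1 h2
      exact (h2.2 : _) h1.2
    have hAneg : P (T i ⁻¹' ((-A) ∩ Blᶜ)) = P (T i ⁻¹' (A ∩ Blᶜ)) := by
      have hset : MeasurableSet (A ∩ Blᶜ) := hA.inter hBlm.compl
      have := congrArg (fun μ : Measure E => μ (A ∩ Blᶜ)) (hsymm i)
      rw [Measure.map_apply (f := fun ω => -T i ω) ((hmeas i).neg) hset, Measure.map_apply (hmeas i) hset] at this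
      convert this using 2
      ext ω
      simp only [Set.mem_preimage, Set.mem_inter_iff, Set.mem_neg, Set.mem_compl_iff]
      constructor
      · rintro ⟨h1, h2⟩
        refine ⟨h1, ?_⟩
        simpa [Bl] using h2
      · rintro ⟨h1, h2⟩
        refine ⟨by simpa using h1, ?_⟩
        simpa [Bl] using h2
    rw [hsplit, measure_union hdisj ((hmeas i) ((hA.neg).inter hBlm.compl)), hAneg,
      hsplit2, measure_union hdisj2 ((hmeas i) (hA.inter hBlm.compl))]
  -- the flipped sum has the same law as the sum
  have hcomp : iIndepFun (fun i => f ∘ T i) P :=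
    hindep.comp (fun _ => f) (fun _ => hfmeas)
  have hsum : Measurable fun g : Fin n → E => ∑ i, g i :=
    Finset.measurable_sum _ fun i _ => measurable_pi_apply i
  have htupF : Measurable (fun ω i => f (T i ω)) :=
    measurable_pi_lambda _ fun i => hfmeas.comp (hmeas i)
  have htupT : Measurable (fun ω i => T i ω) := measurable_pi_lambda _ hmeas
  have hlaw : Measure.map (fun ω => ∑ i, f (T i ω)) P
      = Measure.map (fun ω => ∑ i, T i ω) P := by
    have e1 := Measure.map_map (μ := P) hsum htupF
    have e2 := Measure.map_map (μ := P) hsum htupT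
    have e3 : Measure.map (fun ω i => f (T i ω)) P = Measure.map (fun ω i => T i ω) P := by
      exact (map_tuple_eq_pi P n (fun i => f ∘ T i) (fun i => hfmeas.comp (hmeas i))
        hcomp).trans ((congrArg Measure.pi (funext hmarg)).trans
        (map_tuple_eq_pi P n T hmeas hindep).symm)
    calc Measure.map (fun ω => ∑ i, f (T i ω)) P
        = Measure.map (fun g : Fin n → E => ∑ i, g i)
            (Measure.map (fun ω i => f (T i ω)) P) := e1.symm
      _ = Measure.map (fun g : Fin n → E => ∑ i, g i)
            (Measure.map (fun ω i => T i ω) P) := by rw [e3]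
      _ = Measure.map (fun ω => ∑ i, T i ω) P := e2
  -- probability of the flipped-sum event equals that of the sum event
  have hev : MeasurableSet {x : E | t < ‖x‖} :=
    measurableSet_lt measurable_const measurable_norm
  have heq : P {ω | t < ‖∑ i, f (T i ω)‖} = P {ω | t < ‖∑ i, T i ω‖} := by
    have hsF : Measurable fun ω => ∑ i, f (T i ω) :=
      Finset.measurable_sum _ fun i _ => hfmeas.comp (hmeas i)
    have hsT : Measurable fun ω => ∑ i, T i ω := Finset.measurable_sum _ fun i _ => hmeas i
    have h1 := congrArg (fun μ : Measure E => μ {x | t < ‖x‖}) hlaw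
    rwa [Measure.map_apply hsF hev, Measure.map_apply hsT hev] at h1
  -- pointwise: truncated sum = (S + S')/2, so event inclusion
  have hsub : {ω | t < ‖∑ i, if ‖T i ω‖ ≤ a then T i ω else 0‖}
      ⊆ {ω | t < ‖∑ i, T i ω‖} ∪ {ω | t < ‖∑ i, f (T i ω)‖} := by
    intro ω hω
    simp only [Set.mem_setOf_eq] at hω
    have key : (2 : ℝ) • (∑ i, if ‖T i ω‖ ≤ a then T i ω else 0)
        = (∑ i, T i ω) + ∑ i, f (T i ω) := by
      rw [Finset.smul_sum, ← Finset.sum_add_distrib]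
      refine Finset.sum_congr rfl fun i _ => ?_
      by_cases h : ‖T i ω‖ ≤ a <;> simp [hf, h, two_smul]
    by_contra hcon
    simp only [Set.mem_union, Set.mem_setOf_eq, not_or, not_lt] at hcon
    have : ‖(2:ℝ) • (∑ i, if ‖T i ω‖ ≤ a then T i ω else 0)‖ ≤ 2 * t := by
      rw [key]
      calc ‖(∑ i, T i ω) + ∑ i, f (T i ω)‖ ≤ ‖∑ i, T i ω‖ + ‖∑ i, f (T i ω)‖ :=
            norm_add_le _ _
        _ ≤ t + t := add_le_add hcon.1 hcon.2
        _ = 2 * t := by ring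
    rw [norm_smul] at this
    simp only [Real.norm_ofNat] at this
    nlinarith
  calc P {ω | t < ‖∑ i, if ‖T i ω‖ ≤ a then T i ω else 0‖}
      ≤ P ({ω | t < ‖∑ i, T i ω‖} ∪ {ω | t < ‖∑ i, f (T i ω)‖}) := measure_mono hsub
    _ ≤ P {ω | t < ‖∑ i, T i ω‖} + P {ω | t < ‖∑ i, f (T i ω)‖} := measure_union_le _ _
    _ = 2 * P {ω | t < ‖∑ i, T i ω‖} := by rw [heq]; ring
end

section
/- Let {X, X_n; n ≥ 1} be i.i.d. real-valued random variables with S_n = Σ_{i=1}^n X_i, and let {b_n} be increasing positive reals with b_n → ∞. If limsup_{n→∞} n P(|X| > b_n) > 0, then for every λ > 0, limsup_{n→∞} P(|S_n − n E[X·1{|X| ≤ b_n}]| / b_n > λ) > 0; in particular (S_n − n E[X·1{|X| ≤ b_n}])/b_n does not converge to 0 in probability. -/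
open MeasureTheory ProbabilityTheory Set Filter

lemma tail_small {α : Type*} [MeasurableSpace α] (μ : Measure α) [IsFiniteMeasure μ]
    {W : α → ℝ} (hW : Measurable W) {a : ℕ → ℝ} (ha : Tendsto a atTop atTop)
    {ε : ENNReal} (hε : 0 < ε) : ∀ᶠ n in atTop, μ {x | a n < |W x|} < ε := by
  have hA : ∀ k : ℕ, MeasurableSet {x | (k : ℝ) < |W x|} := fun k =>
    measurableSet_lt measurable_const hW.abs
  have hmono : Antitone (fun k : ℕ => {x | (k : ℝ) < |W x|}) := by
    intro i j hij x hx
    simp only [mem_setOf_eq] at hx ⊢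
    have : (i : ℝ) ≤ (j : ℝ) := by exact_mod_cast hij
    linarith
  have hempty : (⋂ k : ℕ, {x | (k : ℝ) < |W x|}) = ∅ := by
    ext x
    simp only [mem_iInter, mem_setOf_eq, mem_empty_iff_false, iff_false, not_forall, not_lt]
    obtain ⟨k, hk⟩ := exists_nat_ge (|W x|)
    exact ⟨k, hk⟩
  have h0 : Tendsto (μ ∘ fun k : ℕ => {x | (k : ℝ) < |W x|}) atTop (nhds 0) := by
    have := tendsto_measure_iInter_atTop (μ := μ)
      (fun k => (hA k).nullMeasurableSet) hmono ⟨0, measure_ne_top _ _⟩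
    rwa [hempty, measure_empty] at this
  obtain ⟨k, hk⟩ : ∃ k : ℕ, μ {x | (k : ℝ) < |W x|} < ε := by
    have := (h0.eventually (gt_mem_nhds hε)).exists
    simpa using this
  filter_upwards [ha.eventually (eventually_ge_atTop (k : ℝ))] with n hn
  exact lt_of_le_of_lt (measure_mono fun x hx => lt_of_le_of_lt hn hx) hk

lemma half_swap {Ω : Type*} [MeasurableSpace Ω] (P : Measure Ω) [IsProbabilityMeasure P]
    {A : Set (Ω × Ω)} (hA : MeasurableSet A) (hsymm : Prod.swap ⁻¹' A = A)
    {g : Ω × Ω → ℝ} (hg : Measurable g) (hanti : ∀ p, g (Prod.swap p) = - g p) :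
    P.prod P A ≤ 2 * P.prod P (A ∩ {p | 0 ≤ g p}) := by
  have hsw : MeasurePreserving (Prod.swap : Ω × Ω → Ω × Ω) (P.prod P) (P.prod P) :=
    Measure.measurePreserving_swap
  have hmeas : MeasurableSet (A ∩ {p | 0 ≤ g p}) :=
    hA.inter (measurableSet_le measurable_const hg)
  have hpre : Prod.swap ⁻¹' (A ∩ {p | 0 ≤ g p}) = A ∩ {p | g p ≤ 0} := by
    rw [preimage_inter, hsymm]
    congr 1
    ext p
    simp only [mem_preimage, mem_setOf_eq, hanti p]
    constructor
    · intro h; linarith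
    · intro h; linarith
  have h1 : P.prod P (A ∩ {p | g p ≤ 0}) = P.prod P (A ∩ {p | 0 ≤ g p}) := by
    rw [← hpre, hsw.measure_preimage hmeas.nullMeasurableSet]
  have hcover : A ⊆ (A ∩ {p | 0 ≤ g p}) ∪ (A ∩ {p | g p ≤ 0}) := by
    intro p hp
    rcases le_total 0 (g p) with h | h
    · exact Or.inl ⟨hp, h⟩
    · exact Or.inr ⟨hp, h⟩
  calc P.prod P A ≤ P.prod P ((A ∩ {p | 0 ≤ g p}) ∪ (A ∩ {p | g p ≤ 0})) := measure_mono hcover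
    _ ≤ P.prod P (A ∩ {p | 0 ≤ g p}) + P.prod P (A ∩ {p | g p ≤ 0}) := measure_union_le _ _
    _ = 2 * P.prod P (A ∩ {p | 0 ≤ g p}) := by rw [h1]; ring

lemma indep_sub_pairs {Ω : Type*} [MeasurableSpace Ω] (P : Measure Ω) [IsProbabilityMeasure P]
    (X : ℕ → Ω → ℝ) (hmeas : ∀ i, Measurable (X i))
    (hindep : iIndepFun X P) :
    iIndepFun
      (fun i (p : Ω × Ω) => X i p.1 - X i p.2) (P.prod P) := by
  classical
  set Z : ℕ → Ω × Ω → ℝ × ℝ := fun i p => (X i p.1, X i p.2) with hZ_def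
  have hZmeas : ∀ i, Measurable (Z i) := fun i =>
    ((hmeas i).comp measurable_fst).prodMk ((hmeas i).comp measurable_snd)
  set π : ℕ → Set (Set (Ω × Ω)) := fun i =>
    {w | ∃ u v : Set ℝ, MeasurableSet u ∧ MeasurableSet v ∧
      w = {p : Ω × Ω | X i p.1 ∈ u ∧ X i p.2 ∈ v}} with hπ_def
  have h_pi : ∀ i, IsPiSystem (π i) := by
    intro i w1 hw1 w2 hw2 _
    obtain ⟨u1, v1, hu1, hv1, rfl⟩ := hw1
    obtain ⟨u2, v2, hu2, hv2, rfl⟩ := hw2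
    refine ⟨u1 ∩ u2, v1 ∩ v2, hu1.inter hu2, hv1.inter hv2, ?_⟩
    ext p; simp only [mem_inter_iff, mem_setOf_eq]; tauto
  have h_generate : ∀ i, MeasurableSpace.comap (Z i) inferInstance =
      MeasurableSpace.generateFrom (π i) := by
    intro i
    have h1 : (inferInstance : MeasurableSpace (ℝ × ℝ)) =
        MeasurableSpace.generateFrom
          (image2 (· ×ˢ ·) {s : Set ℝ | MeasurableSet s} {t : Set ℝ | MeasurableSet t}) :=
      generateFrom_prod.symm
    rw [h1, MeasurableSpace.comap_generateFrom]
    congr 1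
    ext w
    constructor
    · rintro ⟨t, ⟨u, hu, v, hv, rfl⟩, rfl⟩
      refine ⟨u, v, hu, hv, ?_⟩
      ext p; simp [Z, Set.mem_prod]
    · rintro ⟨u, v, hu, hv, rfl⟩
      refine ⟨u ×ˢ v, ⟨u, hu, v, hv, rfl⟩, ?_⟩
      ext p; simp [Z, Set.mem_prod]
  have h_le : ∀ i, MeasurableSpace.generateFrom (π i) ≤ (inferInstance : MeasurableSpace (Ω × Ω)) := by
    intro i
    refine MeasurableSpace.generateFrom_le ?_
    rintro w ⟨u, v, hu, hv, rfl⟩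
    exact (((hmeas i).comp measurable_fst) hu).inter (((hmeas i).comp measurable_snd) hv)
  have h_ind : iIndepSets π (P.prod P) := by
    rw [iIndepSets_iff]
    intro s f H
    choose u v hu hv hf using H
    set u' : ℕ → Set ℝ := fun i => if h : i ∈ s then u i h else univ with hu'_def
    set v' : ℕ → Set ℝ := fun i => if h : i ∈ s then v i h else univ with hv'_def
    have hu'meas : ∀ i, MeasurableSet (u' i) := by
      intro i; by_cases h : i ∈ s <;> simp [u', h, hu]
    have hv'meas : ∀ i, MeasurableSet (v' i) := by
      intro i; by_cases h : i ∈ s <;> simp [v', h, hv]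
    have hf' : ∀ i ∈ s, f i = {p : Ω × Ω | X i p.1 ∈ u' i ∧ X i p.2 ∈ v' i} := by
      intro i hi
      rw [hf i hi]
      simp [u', v', hi]
    have hsplit : ⋂ i ∈ s, f i =
        ((⋂ i ∈ s, X i ⁻¹' u' i) ×ˢ (⋂ i ∈ s, X i ⁻¹' v' i)) := by
      ext p
      simp only [mem_iInter, Set.mem_prod, mem_preimage]
      constructor
      · intro h
        constructor
        · intro i hi; exact ((hf' i hi ▸ h i hi) : _).1
        · intro i hi; exact ((hf' i hi ▸ h i hi) : _).2
      · rintro ⟨h1, h2⟩ i hi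
        rw [hf' i hi]; exact ⟨h1 i hi, h2 i hi⟩
    have hP1 : P (⋂ i ∈ s, X i ⁻¹' u' i) = ∏ i ∈ s, P (X i ⁻¹' u' i) :=
      hindep.meas_biInter (fun i _ => ⟨u' i, hu'meas i, rfl⟩)
    have hP2 : P (⋂ i ∈ s, X i ⁻¹' v' i) = ∏ i ∈ s, P (X i ⁻¹' v' i) :=
      hindep.meas_biInter (fun i _ => ⟨v' i, hv'meas i, rfl⟩)
    rw [hsplit, Measure.prod_prod, hP1, hP2, ← Finset.prod_mul_distrib]
    refine Finset.prod_congr rfl ?_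
    intro i hi
    rw [hf' i hi]
    have : {p : Ω × Ω | X i p.1 ∈ u' i ∧ X i p.2 ∈ v' i} =
        (X i ⁻¹' u' i) ×ˢ (X i ⁻¹' v' i) := by
      ext p; simp [Set.mem_prod]
    rw [this, Measure.prod_prod]
  have hZindep : iIndepFun Z (P.prod P) := by
    rw [iIndepFun_iff_iIndep]
    have := iIndepSets.iIndep (m := fun i => MeasurableSpace.comap (Z i) inferInstance)
      (fun i => by rw [h_generate i]; exact h_le i) π h_pi h_generate h_ind
    exact this
  have : (fun i (p : Ω × Ω) => X i p.1 - X i p.2) =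
      fun i => (fun z : ℝ × ℝ => z.1 - z.2) ∘ Z i := rfl
  rw [this]
  exact hZindep.comp _ (fun _ => measurable_fst.sub measurable_snd)

lemma law_sub_pairs {Ω : Type*} [MeasurableSpace Ω] (P : Measure Ω) [IsProbabilityMeasure P]
    (X : ℕ → Ω → ℝ) (hmeas : ∀ i, Measurable (X i))
    (hident : ∀ i, Measure.map (X i) P = Measure.map (X 0) P) (i : ℕ) :
    Measure.map (fun p : Ω × Ω => X i p.1 - X i p.2) (P.prod P) =
      Measure.map (fun p : Ω × Ω => X 0 p.1 - X 0 p.2) (P.prod P) := by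
  have key : ∀ j : ℕ, Measure.map (fun p : Ω × Ω => X j p.1 - X j p.2) (P.prod P) =
      Measure.map (fun z : ℝ × ℝ => z.1 - z.2)
        ((Measure.map (X 0) P).prod (Measure.map (X 0) P)) := by
    intro j
    have h1 : (fun p : Ω × Ω => X j p.1 - X j p.2) =
        (fun z : ℝ × ℝ => z.1 - z.2) ∘ (Prod.map (X j) (X j)) := rfl
    rw [h1, ← Measure.map_map (show Measurable (fun z : ℝ × ℝ => z.1 - z.2) from measurable_fst.sub measurable_snd)
      ((hmeas j).prodMap (hmeas j)), ← Measure.map_prod_map _ _ (hmeas j) (hmeas j), hident j]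
  rw [key i, key 0]

set_option maxHeartbeats 1000000 in
lemma core_estimate {Ω : Type*} [MeasurableSpace Ω] (P : Measure Ω) [IsProbabilityMeasure P]
    (X : ℕ → Ω → ℝ) (hmeas : ∀ i, Measurable (X i))
    (hindep : iIndepFun X P)
    (hident : ∀ i, Measure.map (X i) P = Measure.map (X 0) P)
    (lam : ℝ) (hlam : 0 < lam) (cent : ℕ → ℝ) (b : ℕ → ℝ)
    (c u : ℝ) (hc0 : 0 < c) (hc1 : c ≤ 1) (hu0 : 0 ≤ u)
    (hhalf1 : (2⁻¹ : ENNReal) ≤ P {ω | X 0 ω ≤ u})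
    (hhalf2 : (2⁻¹ : ENNReal) ≤ P {ω | -u ≤ X 0 ω})
    (m : ℕ) (hm1 : 1 ≤ m) (hm4 : 4 * lam ≤ (m : ℝ))
    (n : ℕ) (hbn : 0 < b n)
    (hnτ : c ≤ (n : ℝ) * (P {ω | b n < |X 0 ω|}).toReal)
    (ha1 : 1 ≤ b n - u)
    (hmu : (m : ℝ) * u ≤ 2 * lam * b n)
    (hqsmall : ((P.prod P) {p : Ω × Ω | b n - u < |X 0 p.1 - X 0 p.2|}).toReal ≤
      min (1/8) (c / (16 * (m : ℝ)))) :
    ENNReal.ofReal ((c/16)^m / (16 * (Nat.factorial m : ℝ))) ≤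
      P {ω | lam * b n < |∑ i ∈ Finset.range n, X i ω - cent n|} := by
  classical
  set P' : Measure (Ω × Ω) := P.prod P with hP'_def
  set Y : ℕ → Ω × Ω → ℝ := fun i p => X i p.1 - X i p.2 with hY_def
  have hYmeas : ∀ i, Measurable (Y i) := fun i =>
    ((hmeas i).comp measurable_fst).sub ((hmeas i).comp measurable_snd)
  have hYindep : iIndepFun Y P' :=
    indep_sub_pairs P X hmeas hindep
  have hYlaw : ∀ i, Measure.map (Y i) P' = Measure.map (Y 0) P' := fun i =>
    law_sub_pairs P X hmeas hident i
  set a : ℝ := b n - u with ha_def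
  have ha0 : 0 < a := lt_of_lt_of_le one_pos ha1
  set q_E : ENNReal := P' {p | a < Y 0 p} with hq_def
  set s_E : ENNReal := P' {p | |Y 0 p| ≤ a} with hs_def
  -- per-coordinate identifications
  have hcoord : ∀ (i : ℕ) (M : Set ℝ), MeasurableSet M →
      P' (Y i ⁻¹' M) = P' (Y 0 ⁻¹' M) := by
    intro i M hM
    rw [← Measure.map_apply (hYmeas i) hM, hYlaw i, Measure.map_apply (hYmeas 0) hM]
  have hcoord_q : ∀ i, P' {p | a < Y i p} = q_E := by
    intro i
    have h1 : ∀ j, {p : Ω × Ω | a < Y j p} = Y j ⁻¹' (Ioi a) := by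
      intro j; ext p; simp [Set.mem_Ioi]
    rw [h1, hq_def, h1, hcoord i _ measurableSet_Ioi]
  have hcoord_s : ∀ i, P' {p | |Y i p| ≤ a} = s_E := by
    intro i
    have h1 : ∀ j, {p : Ω × Ω | |Y j p| ≤ a} = Y j ⁻¹' {x : ℝ | |x| ≤ a} := by
      intro j; ext p; simp
    have hM : MeasurableSet {x : ℝ | |x| ≤ a} :=
      measurableSet_le measurable_abs measurable_const
    rw [h1, hs_def, h1, hcoord i _ hM]
  -- swap facts
  have hswapMP : MeasurePreserving (Prod.swap : Ω × Ω → Ω × Ω) P' P' :=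
    Measure.measurePreserving_swap
  have hYswap : ∀ i p, Y i (Prod.swap p) = - Y i p := by
    intro i p
    simp [hY_def, Prod.swap, neg_sub]
  have hswapq : P' {p | Y 0 p < -a} = q_E := by
    have hpre : Prod.swap ⁻¹' {p : Ω × Ω | a < Y 0 p} = {p | Y 0 p < -a} := by
      ext p
      simp only [mem_preimage, mem_setOf_eq, hYswap 0 p]
      constructor
      · intro h; linarith
      · intro h; linarith
    rw [← hpre, hswapMP.measure_preimage
      (measurableSet_lt measurable_const (hYmeas 0)).nullMeasurableSet]
  -- tail comparison : P {b n < |X0|} ≤ 4 q_E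
  have hτ4 : P {ω | b n < |X 0 ω|} ≤ 4 * q_E := by
    have hplus : P {ω | b n < X 0 ω} * 2⁻¹ ≤ q_E := by
      have hsub : {ω | b n < X 0 ω} ×ˢ {ω | X 0 ω ≤ u} ⊆ {p : Ω × Ω | a < Y 0 p} := by
        rintro ⟨ω1, ω2⟩ ⟨h1, h2⟩
        simp only [mem_setOf_eq] at h1 h2
        show a < X 0 ω1 - X 0 ω2
        linarith
      calc P {ω | b n < X 0 ω} * 2⁻¹ ≤ P {ω | b n < X 0 ω} * P {ω | X 0 ω ≤ u} :=
            mul_le_mul_right hhalf1 _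
        _ = P' ({ω | b n < X 0 ω} ×ˢ {ω | X 0 ω ≤ u}) := (Measure.prod_prod _ _).symm
        _ ≤ q_E := measure_mono hsub
    have hminus : P {ω | X 0 ω < -(b n)} * 2⁻¹ ≤ P' {p | Y 0 p < -a} := by
      have hsub : {ω | X 0 ω < -(b n)} ×ˢ {ω | -u ≤ X 0 ω} ⊆ {p : Ω × Ω | Y 0 p < -a} := by
        rintro ⟨ω1, ω2⟩ ⟨h1, h2⟩
        simp only [mem_setOf_eq] at h1 h2
        show X 0 ω1 - X 0 ω2 < -a
        linarith
      calc P {ω | X 0 ω < -(b n)} * 2⁻¹ ≤ P {ω | X 0 ω < -(b n)} * P {ω | -u ≤ X 0 ω} :=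
            mul_le_mul_right hhalf2 _
        _ = P' ({ω | X 0 ω < -(b n)} ×ˢ {ω | -u ≤ X 0 ω}) := (Measure.prod_prod _ _).symm
        _ ≤ P' {p | Y 0 p < -a} := measure_mono hsub
    have htwo : ∀ x y : ENNReal, x * 2⁻¹ ≤ y → x ≤ 2 * y := by
      intro x y h
      have := mul_le_mul_left h 2
      rw [mul_assoc, ENNReal.inv_mul_cancel (by norm_num) (by norm_num), mul_one] at this
      calc x ≤ y * 2 := this
        _ = 2 * y := mul_comm _ _
    have hsplit : {ω | b n < |X 0 ω|} ⊆ {ω | b n < X 0 ω} ∪ {ω | X 0 ω < -(b n)} := by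
      intro ω hω
      simp only [mem_setOf_eq, mem_union] at *
      rcases lt_abs.mp hω with h | h
      · exact Or.inl h
      · right; linarith
    calc P {ω | b n < |X 0 ω|} ≤ P ({ω | b n < X 0 ω} ∪ {ω | X 0 ω < -(b n)}) :=
          measure_mono hsplit
      _ ≤ P {ω | b n < X 0 ω} + P {ω | X 0 ω < -(b n)} := measure_union_le _ _
      _ ≤ 2 * q_E + 2 * P' {p | Y 0 p < -a} := by
          gcongr
          · exact htwo _ _ hplus
          · exact htwo _ _ hminus
      _ = 4 * q_E := by rw [hswapq]; ring
  -- real versions and numeric facts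
  set qR : ℝ := q_E.toReal with hqR_def
  set sR : ℝ := s_E.toReal with hsR_def
  have hqR0 : 0 ≤ qR := ENNReal.toReal_nonneg
  have hsR0 : 0 ≤ sR := ENNReal.toReal_nonneg
  have hq_fin : q_E ≠ ⊤ := measure_ne_top _ _
  have hs_fin : s_E ≠ ⊤ := measure_ne_top _ _
  have habs_eq : {p : Ω × Ω | a < |Y 0 p|} = {p | a < Y 0 p} ∪ {p | Y 0 p < -a} := by
    ext p
    simp only [mem_setOf_eq, mem_union]
    constructor
    · intro h
      rcases lt_abs.mp h with h | h
      · exact Or.inl h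
      · right; linarith
    · intro h
      rcases h with h | h
      · exact lt_of_lt_of_le h (le_abs_self _)
      · calc a < -(Y 0 p) := by linarith
          _ ≤ |Y 0 p| := neg_le_abs _
  have habs2q : P' {p : Ω × Ω | a < |Y 0 p|} = 2 * q_E := by
    rw [habs_eq, measure_union ?hd ?hm]
    · rw [hswapq]; ring
    case hd =>
      rw [Set.disjoint_left]
      intro p h1 h2
      simp only [mem_setOf_eq] at h1 h2
      linarith
    case hm => exact measurableSet_lt (hYmeas 0) measurable_const
  -- q bounds from hqsmall
  have hqsmall' : qR ≤ min (1/8) (c / (16 * (m : ℝ))) := by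
    have h1 : q_E ≤ P' {p : Ω × Ω | a < |Y 0 p|} :=
      measure_mono (fun p hp => show a < |Y 0 p| from lt_of_lt_of_le hp (le_abs_self _))
    have h2 : qR ≤ (P' {p : Ω × Ω | a < |Y 0 p|}).toReal :=
      ENNReal.toReal_mono (measure_ne_top _ _) h1
    exact le_trans h2 hqsmall
  have hq8 : qR ≤ 1/8 := le_trans hqsmall' (min_le_left _ _)
  have hqm : (m : ℝ) * qR ≤ c/16 := by
    have h1 : qR ≤ c / (16 * (m : ℝ)) := le_trans hqsmall' (min_le_right _ _)
    have hm0 : (0:ℝ) < (m : ℝ) := by exact_mod_cast hm1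
    rw [le_div_iff₀ (by positivity)] at h1
    nlinarith
  -- sR = 1 - 2 qR
  have hmA : MeasurableSet {p : Ω × Ω | a < |Y 0 p|} :=
    measurableSet_lt measurable_const (hYmeas 0).abs
  have hcompl : {p : Ω × Ω | |Y 0 p| ≤ a} = {p : Ω × Ω | a < |Y 0 p|}ᶜ := by
    ext p; simp only [mem_setOf_eq, mem_compl_iff, not_lt]
  have h2q1 : 2 * q_E ≤ 1 := habs2q ▸ prob_le_one
  have hsum1 : s_E + 2 * q_E = 1 := by
    show P' {p | |Y 0 p| ≤ a} + 2 * q_E = 1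
    rw [hcompl, measure_compl hmA (measure_ne_top _ _), measure_univ, habs2q]
    exact tsub_add_cancel_of_le h2q1
  have hsR_eq : sR + 2 * qR = 1 := by
    have := congrArg ENNReal.toReal hsum1
    rw [ENNReal.toReal_add hs_fin (by finiteness), ENNReal.toReal_mul] at this
    simpa using this
  -- lower bound on qR
  have hτfin : (P {ω | b n < |X 0 ω|}) ≠ ⊤ := measure_ne_top _ _
  have hτ4R : (P {ω | b n < |X 0 ω|}).toReal ≤ 4 * qR := by
    have := ENNReal.toReal_mono (by finiteness) hτ4
    rwa [ENNReal.toReal_mul, show ((4:ENNReal)).toReal = (4:ℝ) by norm_num] at this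
  have hτR1 : (P {ω | b n < |X 0 ω|}).toReal ≤ 1 := by
    have := ENNReal.toReal_mono (by norm_num) (prob_le_one (μ := P) (s := {ω | b n < |X 0 ω|}))
    simpa using this
  have hn1 : 1 ≤ n := by
    by_contra h
    push_neg at h
    interval_cases n
    simp at hnτ
    linarith
  have hn0R : (0:ℝ) < (n : ℝ) := by exact_mod_cast hn1
  have hq_low : c ≤ 4 * (n:ℝ) * qR := by
    calc c ≤ (n:ℝ) * (P {ω | b n < |X 0 ω|}).toReal := hnτ
      _ ≤ (n:ℝ) * (4 * qR) := by
          apply mul_le_mul_of_nonneg_left hτ4R (le_of_lt hn0R)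
      _ = 4 * (n:ℝ) * qR := by ring
  have hqR_pos : 0 < qR := by nlinarith
  -- the block length
  set ℓ : ℕ := min n (Nat.ceil (c / (8 * qR))) with hℓ_def
  have hℓn : ℓ ≤ n := min_le_left _ _
  have hmR : (0:ℝ) < (m:ℝ) := by exact_mod_cast hm1
  have hn4m : 4 * m ≤ n := by
    have h1 : c / (4 * (n:ℝ)) ≤ qR := by
      rw [div_le_iff₀ (by positivity)]
      nlinarith
    have h2 : qR ≤ c / (16 * (m:ℝ)) := le_trans hqsmall' (min_le_right _ _)
    have h3 : c / (4 * (n:ℝ)) ≤ c / (16 * (m:ℝ)) := le_trans h1 h2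
    have h4 : 16 * (m:ℝ) ≤ 4 * (n:ℝ) := by
      rw [div_le_div_iff₀ (by positivity) (by positivity)] at h3
      exact le_of_mul_le_mul_left (by linarith) hc0
    have : ((4 * m : ℕ) : ℝ) ≤ ((n:ℕ):ℝ) := by push_cast; linarith
    exact_mod_cast this
  have hceil2m : 2 * m ≤ Nat.ceil (c / (8 * qR)) := by
    have h1 : ((2 * m : ℕ):ℝ) ≤ c / (8 * qR) := by
      rw [le_div_iff₀ (by positivity)]
      push_cast
      linarith
    calc (2 * m : ℕ) ≤ Nat.ceil (((2*m : ℕ):ℝ)) := by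
          rw [Nat.ceil_natCast]
      _ ≤ Nat.ceil (c / (8 * qR)) := Nat.ceil_le_ceil h1
  have h2mℓ : 2 * m ≤ ℓ := le_min (by omega) hceil2m
  have hmℓ : m ≤ ℓ := by omega
  have hℓ_low : c / 8 ≤ (ℓ:ℝ) * qR := by
    rcases le_total n (Nat.ceil (c / (8 * qR))) with h | h
    · have : ℓ = n := min_eq_left h
      rw [this]
      linarith
    · have hℓ_eq : ℓ = Nat.ceil (c / (8 * qR)) := min_eq_right h
      have h1 : c / (8 * qR) ≤ (ℓ:ℝ) := by rw [hℓ_eq]; exact Nat.le_ceil _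
      rw [div_le_iff₀ (by positivity)] at h1
      linarith [mul_le_mul_of_nonneg_right h1 hqR0]
  have hℓ_up : (ℓ:ℝ) * qR ≤ c / 8 + qR := by
    have h1 : (ℓ:ℝ) ≤ (Nat.ceil (c / (8 * qR)) : ℝ) := by
      exact_mod_cast min_le_right n _
    have h2 : (Nat.ceil (c / (8 * qR)) : ℝ) < c / (8 * qR) + 1 :=
      Nat.ceil_lt_add_one (by positivity)
    have h3 : (ℓ:ℝ) * qR ≤ (c / (8 * qR) + 1) * qR := by nlinarith
    have h4 : (c / (8 * qR)) * qR = c / 8 := by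
      field_simp
    nlinarith
  -- events
  set T : Ω × Ω → ℝ := fun p => ∑ i ∈ Finset.range n, Y i p with hT_def
  set G : Set Ω := {ω | lam * b n < |∑ i ∈ Finset.range n, X i ω - cent n|} with hG_def
  have hGmeas : MeasurableSet G :=
    measurableSet_lt measurable_const
      (((Finset.measurable_sum (Finset.range n) (fun i _ => hmeas i)).sub measurable_const).abs)
  set E : Finset ℕ → Set (Ω × Ω) := fun I =>
    (⋂ i ∈ I, {p | a < Y i p}) ∩
      ((⋂ i ∈ Finset.range ℓ \ I, {p | |Y i p| ≤ a}) ∩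
        {p | 0 ≤ ∑ i ∈ Finset.range n \ I, Y i p}) with hE_def
  have hsetq : ∀ i, {p : Ω × Ω | a < Y i p} = Y i ⁻¹' (Ioi a) := by
    intro i; ext p; simp [Set.mem_Ioi]
  have hMabs : MeasurableSet {x : ℝ | |x| ≤ a} := measurableSet_le measurable_abs measurable_const
  have hsets : ∀ i, {p : Ω × Ω | |Y i p| ≤ a} = Y i ⁻¹' {x : ℝ | |x| ≤ a} := by
    intro i; ext p; simp
  have hEmeas : ∀ I : Finset ℕ, MeasurableSet (E I) := by
    intro I
    rw [hE_def]
    refine MeasurableSet.inter ?_ (MeasurableSet.inter ?_ ?_)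
    · exact MeasurableSet.biInter (Set.to_countable _)
        (fun i _ => measurableSet_lt measurable_const (hYmeas i))
    · exact MeasurableSet.biInter (Set.to_countable _)
        (fun i _ => measurableSet_le (hYmeas i).abs measurable_const)
    · exact measurableSet_le measurable_const (Finset.measurable_sum _ (fun i _ => hYmeas i))
  have hEsub : ∀ I ∈ Finset.powersetCard m (Finset.range ℓ),
      E I ⊆ {p | 2 * lam * b n < T p} := by
    intro I hI p hp
    obtain ⟨hIsub, hIcard⟩ := Finset.mem_powersetCard.mp hI
    rw [hE_def] at hp
    obtain ⟨hp1, hp2, hp3⟩ := hp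
    simp only [Set.mem_iInter, mem_setOf_eq] at hp1
    have hp3' : 0 ≤ ∑ i ∈ Finset.range n \ I, Y i p := hp3
    have hIn : I ⊆ Finset.range n := hIsub.trans (Finset.range_subset_range.mpr hℓn)
    have hInonempty : I.Nonempty := Finset.card_pos.mp (by rw [hIcard]; omega)
    have hsumI : (m:ℝ) * a < ∑ i ∈ I, Y i p := by
      have h1 : ∑ _i ∈ I, a < ∑ i ∈ I, Y i p :=
        Finset.sum_lt_sum_of_nonempty hInonempty (fun i hi => hp1 i hi)
      rwa [Finset.sum_const, hIcard, nsmul_eq_mul] at h1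
    have hsplit : ∑ i ∈ Finset.range n \ I, Y i p + ∑ i ∈ I, Y i p = T p :=
      Finset.sum_sdiff hIn
    show 2 * lam * b n < T p
    have hma : 2 * lam * b n ≤ (m:ℝ) * a := by
      have h1 : 4 * lam * b n ≤ (m:ℝ) * b n := mul_le_mul_of_nonneg_right hm4 (le_of_lt hbn)
      have h2 : (m:ℝ) * a = (m:ℝ) * b n - (m:ℝ) * u := by rw [ha_def]; ring
      linarith
    linarith
  have hEdisj : Set.PairwiseDisjoint ↑(Finset.powersetCard m (Finset.range ℓ)) E := by
    intro I hI J hJ hIJ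
    rw [Finset.mem_coe] at hI hJ
    have hIsub : I ⊆ Finset.range ℓ := (Finset.mem_powersetCard.mp hI).1
    have hIcard : I.card = m := (Finset.mem_powersetCard.mp hI).2
    have hJcard : J.card = m := (Finset.mem_powersetCard.mp hJ).2
    have hne : ¬ I ⊆ J := by
      intro hsub
      exact hIJ (Finset.eq_of_subset_of_card_le hsub (by omega))
    obtain ⟨i, hiI, hiJ⟩ := Finset.not_subset.mp hne
    rw [Function.onFun, Set.disjoint_left]
    intro p hpI hpJ
    rw [hE_def] at hpI hpJ
    obtain ⟨hp1, _, _⟩ := hpI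
    obtain ⟨_, hq2, _⟩ := hpJ
    simp only [Set.mem_iInter, mem_setOf_eq] at hp1 hq2
    have h1 : a < Y i p := hp1 i hiI
    have h2 : |Y i p| ≤ a := hq2 i (Finset.mem_sdiff.mpr ⟨hIsub hiI, hiJ⟩)
    have h3 := le_of_abs_le h2
    linarith
  -- measure lower bound for each E I
  have hEbound : ∀ I ∈ Finset.powersetCard m (Finset.range ℓ),
      2⁻¹ * (q_E ^ m * s_E ^ (ℓ - m)) ≤ P' (E I) := by
    intro I hI
    obtain ⟨hIsub, hIcard⟩ := Finset.mem_powersetCard.mp hI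
    have hIn : I ⊆ Finset.range n := hIsub.trans (Finset.range_subset_range.mpr hℓn)
    have hID : IndepFun (fun p (i : I) => Y i p)
        (fun p (j : (Finset.range n \ I : Finset ℕ)) => Y j p) P' :=
      hYindep.indepFun_finset I (Finset.range n \ I) Finset.disjoint_sdiff hYmeas
    set SA : Set (I → ℝ) := {g | ∀ i, a < g i} with hSA_def
    have hSA : MeasurableSet SA := by
      have : SA = ⋂ i, (fun g : I → ℝ => g i) ⁻¹' (Ioi a) := by
        ext g; simp [hSA_def, Set.mem_Ioi]
      rw [this]
      exact MeasurableSet.iInter (fun i => (measurable_pi_apply i) measurableSet_Ioi)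
    set SB : Set ((Finset.range n \ I : Finset ℕ) → ℝ) :=
      {g | (∀ j : (Finset.range n \ I : Finset ℕ), ((j : ℕ) ∈ Finset.range ℓ) → |g j| ≤ a)
        ∧ 0 ≤ ∑ j, g j} with hSB_def
    have hSB : MeasurableSet SB := by
      have hSBeq : SB = (⋂ j : (Finset.range n \ I : Finset ℕ),
          {g : (Finset.range n \ I : Finset ℕ) → ℝ | ((j : ℕ) ∈ Finset.range ℓ) → |g j| ≤ a}) ∩
          {g | 0 ≤ ∑ j, g j} := by
        ext g
        simp only [hSB_def, mem_setOf_eq, mem_inter_iff, Set.mem_iInter]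
      rw [hSBeq]
      refine MeasurableSet.inter (MeasurableSet.iInter fun j => ?_)
        (measurableSet_le measurable_const
          (Finset.measurable_sum _ (fun j _ => measurable_pi_apply j)))
      by_cases h : (j : ℕ) ∈ Finset.range ℓ
      · simp only [h, forall_true_left]
        exact measurableSet_le ((measurable_pi_apply j).abs) measurable_const
      · simp only [h, false_implies]
        exact MeasurableSet.univ
    have hApre : (fun p (i : I) => Y i p) ⁻¹' SA = ⋂ i ∈ I, {p : Ω × Ω | a < Y i p} := by
      ext p
      simp only [mem_preimage, hSA_def, mem_setOf_eq, Set.mem_iInter, Subtype.forall]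
    have hsum : ∀ p : Ω × Ω, (∑ j : (Finset.range n \ I : Finset ℕ), Y (j : ℕ) p) =
        ∑ i ∈ Finset.range n \ I, Y i p := fun p =>
      Finset.sum_coe_sort (Finset.range n \ I) (fun i => Y i p)
    have hBpre : (fun p (j : (Finset.range n \ I : Finset ℕ)) => Y j p) ⁻¹' SB =
        (⋂ i ∈ Finset.range ℓ \ I, {p : Ω × Ω | |Y i p| ≤ a}) ∩
          {p : Ω × Ω | 0 ≤ ∑ i ∈ Finset.range n \ I, Y i p} := by
      ext p
      constructor
      · intro hmem
        have h1 : ∀ j : (Finset.range n \ I : Finset ℕ), ((j : ℕ) ∈ Finset.range ℓ) →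
            |Y (j : ℕ) p| ≤ a := hmem.1
        have h2 : 0 ≤ ∑ j : (Finset.range n \ I : Finset ℕ), Y (j : ℕ) p := hmem.2
        refine ⟨Set.mem_iInter₂.mpr ?_, ?_⟩
        · intro i hi
          rw [Finset.mem_sdiff] at hi
          have hin : i ∈ Finset.range n \ I :=
            Finset.mem_sdiff.mpr ⟨Finset.range_subset_range.mpr hℓn hi.1, hi.2⟩
          exact h1 ⟨i, hin⟩ hi.1
        · show 0 ≤ ∑ i ∈ Finset.range n \ I, Y i p
          rw [← hsum p]
          exact h2
      · rintro ⟨hA', hC⟩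
        have hA'' := Set.mem_iInter₂.mp hA'
        refine ⟨?_, ?_⟩
        · intro j hjℓ
          have hj := j.2
          rw [Finset.mem_sdiff] at hj
          exact hA'' (j : ℕ) (Finset.mem_sdiff.mpr ⟨hjℓ, hj.2⟩)
        · show 0 ≤ ∑ j : (Finset.range n \ I : Finset ℕ), Y (j : ℕ) p
          rw [hsum p]
          exact hC
    have hPA : P' (⋂ i ∈ I, {p : Ω × Ω | a < Y i p}) = q_E ^ m := by
      rw [hYindep.meas_biInter
        (fun i (_ : i ∈ I) => ⟨Ioi a, measurableSet_Ioi, (hsetq i).symm⟩)]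
      rw [Finset.prod_congr rfl (fun i _ => hcoord_q i), Finset.prod_const, hIcard]
    have hPsmall : P' (⋂ i ∈ Finset.range ℓ \ I, {p : Ω × Ω | |Y i p| ≤ a}) =
        s_E ^ (ℓ - m) := by
      rw [hYindep.meas_biInter
        (fun i (_ : i ∈ Finset.range ℓ \ I) => ⟨{x : ℝ | |x| ≤ a}, hMabs, (hsets i).symm⟩)]
      rw [Finset.prod_congr rfl (fun i _ => hcoord_s i), Finset.prod_const,
        Finset.card_sdiff_of_subset hIsub, Finset.card_range, hIcard]
    have hhalfB : s_E ^ (ℓ - m) ≤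
        2 * P' ((⋂ i ∈ Finset.range ℓ \ I, {p : Ω × Ω | |Y i p| ≤ a}) ∩
          {p : Ω × Ω | 0 ≤ ∑ i ∈ Finset.range n \ I, Y i p}) := by
      rw [← hPsmall]
      have hAm : MeasurableSet (⋂ i ∈ Finset.range ℓ \ I, {p : Ω × Ω | |Y i p| ≤ a}) :=
        MeasurableSet.biInter (Set.to_countable _)
          (fun i _ => measurableSet_le (hYmeas i).abs measurable_const)
      have hsymm : Prod.swap ⁻¹' (⋂ i ∈ Finset.range ℓ \ I, {p : Ω × Ω | |Y i p| ≤ a}) =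
          ⋂ i ∈ Finset.range ℓ \ I, {p : Ω × Ω | |Y i p| ≤ a} := by
        ext p
        simp only [mem_preimage, Set.mem_iInter, mem_setOf_eq]
        constructor
        · intro h i hi
          have := h i hi
          rw [hYswap i p, abs_neg] at this
          exact this
        · intro h i hi
          rw [hYswap i p, abs_neg]
          exact h i hi
      have hganti : ∀ p : Ω × Ω, (∑ i ∈ Finset.range n \ I, Y i (Prod.swap p)) =
          -(∑ i ∈ Finset.range n \ I, Y i p) := by
        intro p
        rw [← Finset.sum_neg_distrib]
        exact Finset.sum_congr rfl (fun i _ => hYswap i p)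
      exact half_swap P hAm hsymm
        (Finset.measurable_sum _ (fun i _ => hYmeas i)) hganti
    have hhalf' : 2⁻¹ * s_E ^ (ℓ - m) ≤
        P' ((⋂ i ∈ Finset.range ℓ \ I, {p : Ω × Ω | |Y i p| ≤ a}) ∩
          {p : Ω × Ω | 0 ≤ ∑ i ∈ Finset.range n \ I, Y i p}) := by
      calc 2⁻¹ * s_E ^ (ℓ - m) ≤ 2⁻¹ * (2 * P' _) := mul_le_mul_right hhalfB _
        _ = P' _ := by
          rw [← mul_assoc, ENNReal.inv_mul_cancel (by norm_num) (by norm_num), one_mul]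
    have hPE : P' (E I) = q_E ^ m *
        P' ((⋂ i ∈ Finset.range ℓ \ I, {p : Ω × Ω | |Y i p| ≤ a}) ∩
          {p : Ω × Ω | 0 ≤ ∑ i ∈ Finset.range n \ I, Y i p}) := by
      rw [hE_def]
      simp only []
      rw [← hApre, ← hBpre, hID.meas_inter ⟨SA, hSA, rfl⟩ ⟨SB, hSB, rfl⟩, hApre, hBpre, hPA]
    rw [hPE]
    calc 2⁻¹ * (q_E ^ m * s_E ^ (ℓ - m)) = q_E ^ m * (2⁻¹ * s_E ^ (ℓ - m)) := by ring
      _ ≤ _ := mul_le_mul_right hhalf' _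
  -- union bound
  have hUnion : (Nat.choose ℓ m : ENNReal) * (2⁻¹ * (q_E ^ m * s_E ^ (ℓ - m))) ≤
      P' {p : Ω × Ω | 2 * lam * b n < T p} := by
    have h1 : P' (⋃ I ∈ Finset.powersetCard m (Finset.range ℓ), E I) =
        ∑ I ∈ Finset.powersetCard m (Finset.range ℓ), P' (E I) :=
      measure_biUnion_finset hEdisj (fun I _ => hEmeas I)
    have h2 : ∑ I ∈ Finset.powersetCard m (Finset.range ℓ),
        (2⁻¹ * (q_E ^ m * s_E ^ (ℓ - m))) ≤
        ∑ I ∈ Finset.powersetCard m (Finset.range ℓ), P' (E I) :=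
      Finset.sum_le_sum hEbound
    rw [Finset.sum_const, Finset.card_powersetCard, Finset.card_range, nsmul_eq_mul] at h2
    have h3 : P' (⋃ I ∈ Finset.powersetCard m (Finset.range ℓ), E I) ≤
        P' {p : Ω × Ω | 2 * lam * b n < T p} :=
      measure_mono (Set.iUnion₂_subset hEsub)
    calc (Nat.choose ℓ m : ENNReal) * (2⁻¹ * (q_E ^ m * s_E ^ (ℓ - m)))
        ≤ ∑ I ∈ Finset.powersetCard m (Finset.range ℓ), P' (E I) := h2
      _ = P' (⋃ I ∈ Finset.powersetCard m (Finset.range ℓ), E I) := h1.symm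
      _ ≤ _ := h3
  -- transfer to the original space
  have hT2G : P' {p : Ω × Ω | 2 * lam * b n < T p} ≤ 2 * P G := by
    have hsub : {p : Ω × Ω | 2 * lam * b n < T p} ⊆ (G ×ˢ univ) ∪ (univ ×ˢ G) := by
      intro p hp
      have hp' : 2 * lam * b n < T p := hp
      by_contra hcon
      rw [Set.mem_union] at hcon
      push_neg at hcon
      obtain ⟨h1, h2⟩ := hcon
      have h1' : p.1 ∉ G := fun h => h1 ⟨h, Set.mem_univ _⟩
      have h2' : p.2 ∉ G := fun h => h2 ⟨Set.mem_univ _, h⟩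
      rw [hG_def, Set.mem_setOf_eq, not_lt] at h1' h2'
      have hTeq : T p = (∑ i ∈ Finset.range n, X i p.1 - cent n) -
          (∑ i ∈ Finset.range n, X i p.2 - cent n) := by
        rw [hT_def]
        simp only [hY_def]
        rw [Finset.sum_sub_distrib]
        ring
      have ha1' := abs_le.mp h1'
      have ha2' := abs_le.mp h2'
      rw [hTeq] at hp'
      linarith [ha1'.1, ha1'.2, ha2'.1, ha2'.2]
    calc P' {p : Ω × Ω | 2 * lam * b n < T p}
        ≤ P' ((G ×ˢ univ) ∪ (univ ×ˢ G)) := measure_mono hsub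
      _ ≤ P' (G ×ˢ univ) + P' (univ ×ˢ G) := measure_union_le _ _
      _ = P G * 1 + 1 * P G := by rw [Measure.prod_prod, Measure.prod_prod, measure_univ]
      _ = 2 * P G := by rw [mul_one, one_mul, two_mul]
  have hchain : (Nat.choose ℓ m : ENNReal) * (2⁻¹ * (q_E ^ m * s_E ^ (ℓ - m))) ≤ 2 * P G :=
    le_trans hUnion hT2G
  -- convert to reals
  have hq_eq : q_E = ENNReal.ofReal qR := (ENNReal.ofReal_toReal hq_fin).symm
  have hs_eq : s_E = ENNReal.ofReal sR := (ENNReal.ofReal_toReal hs_fin).symm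
  have h2inv : (2⁻¹ : ENNReal) = ENNReal.ofReal (2⁻¹ : ℝ) := by
    rw [ENNReal.ofReal_inv_of_pos (by norm_num)]
    norm_num
  have hRHS : (Nat.choose ℓ m : ENNReal) * (2⁻¹ * (q_E ^ m * s_E ^ (ℓ - m))) =
      ENNReal.ofReal ((Nat.choose ℓ m : ℝ) * (2⁻¹ * (qR ^ m * sR ^ (ℓ - m)))) := by
    rw [hq_eq, hs_eq, h2inv, ← ENNReal.ofReal_pow hqR0, ← ENNReal.ofReal_pow hsR0,
      ← ENNReal.ofReal_mul (by positivity), ← ENNReal.ofReal_mul (by norm_num),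
      ← ENNReal.ofReal_natCast (Nat.choose ℓ m), ← ENNReal.ofReal_mul (by positivity)]
  -- real-number chain
  have hfactpos : (0:ℝ) < (Nat.factorial m : ℝ) := by exact_mod_cast Nat.factorial_pos m
  have hchoose : ((ℓ + 1 - m : ℕ) : ℝ) ^ m ≤ (Nat.factorial m : ℝ) * (Nat.choose ℓ m : ℝ) := by
    have h := Nat.pow_sub_le_descFactorial ℓ m
    rw [Nat.descFactorial_eq_factorial_mul_choose] at h
    exact_mod_cast h
  have hcast1 : ((ℓ + 1 - m : ℕ) : ℝ) = (ℓ : ℝ) + 1 - (m : ℝ) := by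
    have hle : m ≤ ℓ + 1 := by omega
    rw [Nat.cast_sub hle]
    push_cast
    ring
  have hc16 : c / 16 ≤ ((ℓ + 1 - m : ℕ) : ℝ) * qR := by
    rw [hcast1]
    nlinarith [hℓ_low, hqm, hqR0]
  have hA : (c/16) ^ m / (Nat.factorial m : ℝ) ≤ (Nat.choose ℓ m : ℝ) * qR ^ m := by
    rw [div_le_iff₀ hfactpos]
    calc (c/16) ^ m ≤ (((ℓ + 1 - m : ℕ) : ℝ) * qR) ^ m :=
          pow_le_pow_left₀ (by positivity) hc16 m
      _ = ((ℓ + 1 - m : ℕ) : ℝ) ^ m * qR ^ m := mul_pow _ _ _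
      _ ≤ ((Nat.factorial m : ℝ) * (Nat.choose ℓ m : ℝ)) * qR ^ m :=
          mul_le_mul_of_nonneg_right hchoose (by positivity)
      _ = (Nat.choose ℓ m : ℝ) * qR ^ m * (Nat.factorial m : ℝ) := by ring
  have hB : (1:ℝ)/2 ≤ sR ^ (ℓ - m) := by
    have hbern : 1 + ((ℓ - m : ℕ) : ℝ) * (-(2*qR)) ≤ (1 + (-(2*qR))) ^ (ℓ - m) :=
      one_add_mul_le_pow (by linarith) (ℓ - m)
    have hsR_form : sR = 1 + (-(2*qR)) := by linarith
    have hcastle : ((ℓ - m : ℕ) : ℝ) ≤ (ℓ : ℝ) := by exact_mod_cast Nat.sub_le ℓ m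
    have hcastnn : (0:ℝ) ≤ ((ℓ - m : ℕ) : ℝ) := Nat.cast_nonneg _
    have h5 : ((ℓ - m : ℕ) : ℝ) * (2*qR) ≤ (ℓ : ℝ) * (2*qR) := by nlinarith
    rw [hsR_form]
    refine le_trans ?_ hbern
    nlinarith [hℓ_up, hq8, hc1]
  have hreal : 2 * ((c/16) ^ m / (16 * (Nat.factorial m : ℝ))) ≤
      (Nat.choose ℓ m : ℝ) * (2⁻¹ * (qR ^ m * sR ^ (ℓ - m))) := by
    have hA0 : (0:ℝ) ≤ (Nat.choose ℓ m : ℝ) * qR ^ m := by positivity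
    calc 2 * ((c/16) ^ m / (16 * (Nat.factorial m : ℝ)))
        = ((c/16) ^ m / (Nat.factorial m : ℝ)) * (1/8) := by
          field_simp
          ring
      _ ≤ ((Nat.choose ℓ m : ℝ) * qR ^ m) * (1/8) :=
          mul_le_mul_of_nonneg_right hA (by norm_num)
      _ ≤ ((Nat.choose ℓ m : ℝ) * qR ^ m) * (sR ^ (ℓ - m) / 2) := by
          apply mul_le_mul_of_nonneg_left ?_ hA0
          linarith
      _ = (Nat.choose ℓ m : ℝ) * (2⁻¹ * (qR ^ m * sR ^ (ℓ - m))) := by ring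
  have h2PG : ENNReal.ofReal (2 * ((c/16) ^ m / (16 * (Nat.factorial m : ℝ)))) ≤ 2 * P G := by
    calc ENNReal.ofReal (2 * ((c/16) ^ m / (16 * (Nat.factorial m : ℝ))))
        ≤ ENNReal.ofReal ((Nat.choose ℓ m : ℝ) * (2⁻¹ * (qR ^ m * sR ^ (ℓ - m)))) :=
          ENNReal.ofReal_le_ofReal hreal
      _ = (Nat.choose ℓ m : ENNReal) * (2⁻¹ * (q_E ^ m * s_E ^ (ℓ - m))) := hRHS.symm
      _ ≤ 2 * P G := hchain
  rw [ENNReal.ofReal_mul (by norm_num : (0:ℝ) ≤ 2)] at h2PG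
  rw [show ENNReal.ofReal (2:ℝ) = 2 from by norm_num] at h2PG
  exact (ENNReal.mul_le_mul_iff_right (by norm_num) (by norm_num)).mp h2PG

set_option maxHeartbeats 1000000 in
/-- Converse direction of Corollary 3.3: for i.i.d. real Xₙ and increasing bₙ → ∞,
if limsup n P(|X| > bₙ) > 0 then for every λ > 0,
limsup P(|Sₙ − n E[X 1{|X|≤bₙ}]|/bₙ > λ) > 0; in particular no convergence in
probability to 0. -/
theorem stmt15 {Ω : Type*} [MeasurableSpace Ω] (P : Measure Ω) [IsProbabilityMeasure P]
    (X : ℕ → Ω → ℝ)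
    (hmeas : ∀ i, Measurable (X i))
    (hindep : iIndepFun X P)
    (hident : ∀ i, Measure.map (X i) P = Measure.map (X 0) P)
    (b : ℕ → ℝ) (hb : ∀ n, 0 < b n) (hbmono : Monotone b)
    (hbtop : Tendsto b atTop atTop)
    (htail : 0 < Filter.limsup (fun n : ℕ => (n : ENNReal) * P {ω | b n < |X 0 ω|}) atTop) :
    (∀ lam : ℝ, 0 < lam →
      0 < Filter.limsup (fun n : ℕ =>
        P {ω | lam * b n < |∑ i ∈ Finset.range n, X i ω -
          (n : ℝ) * ∫ ω', (if |X 0 ω'| ≤ b n then X 0 ω' else 0) ∂P|}) atTop) ∧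
    ¬ TendstoInMeasure P
      (fun n ω => (b n)⁻¹ *
        (∑ i ∈ Finset.range n, X i ω -
          (n : ℝ) * ∫ ω', (if |X 0 ω'| ≤ b n then X 0 ω' else 0) ∂P))
      atTop (0 : Ω → ℝ) := by
  classical
  set cent : ℕ → ℝ := fun n => (n : ℝ) * ∫ ω', (if |X 0 ω'| ≤ b n then X 0 ω' else 0) ∂P
    with hcent_def
  have main : ∀ lam : ℝ, 0 < lam →
      0 < Filter.limsup (fun n : ℕ =>
        P {ω | lam * b n < |∑ i ∈ Finset.range n, X i ω - cent n|}) atTop := by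
    intro lam hlam
    -- extract the constant c
    obtain ⟨aE, ha0, haL⟩ := exists_between htail
    have hfreqE : ∃ᶠ n : ℕ in atTop, aE < (n : ENNReal) * P {ω | b n < |X 0 ω|} :=
      frequently_lt_of_lt_limsup (isCoboundedUnder_le_of_le atTop (fun n => zero_le)) haL
    set cE : ENNReal := min aE 1 with hcE_def
    have hcE0 : 0 < cE := lt_min ha0 one_pos
    have hcEtop : cE ≠ ⊤ := by
      have : cE ≤ 1 := min_le_right _ _
      exact ne_top_of_le_ne_top ENNReal.one_ne_top this
    set c : ℝ := cE.toReal with hc_def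
    have hc0 : 0 < c := ENNReal.toReal_pos (ne_of_gt hcE0) hcEtop
    have hc1 : c ≤ 1 := by
      have h1 : cE ≤ 1 := min_le_right _ _
      have := ENNReal.toReal_mono ENNReal.one_ne_top h1
      simpa using this
    have hfreq : ∃ᶠ n : ℕ in atTop, c ≤ (n : ℝ) * (P {ω | b n < |X 0 ω|}).toReal := by
      refine hfreqE.mono (fun n hn => ?_)
      have h1 : cE ≤ (n : ENNReal) * P {ω | b n < |X 0 ω|} :=
        le_trans (min_le_left _ _) (le_of_lt hn)
      have hfin : (n : ENNReal) * P {ω | b n < |X 0 ω|} ≠ ⊤ :=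
        ENNReal.mul_ne_top (ENNReal.natCast_ne_top n) (measure_ne_top _ _)
      have h2 := ENNReal.toReal_mono hfin h1
      rw [ENNReal.toReal_mul] at h2
      simpa using h2
    -- extract u
    obtain ⟨k, hk⟩ := (tail_small P (hmeas 0)
      (tendsto_natCast_atTop_atTop (R := ℝ)) (ε := 2⁻¹) (by norm_num)).exists
    set u : ℝ := (k : ℝ) with hu_def
    have hu0 : 0 ≤ u := Nat.cast_nonneg _
    have hmeasTail : MeasurableSet {ω | u < |X 0 ω|} :=
      measurableSet_lt measurable_const (hmeas 0).abs
    have hcompl_meas : P {ω | u < |X 0 ω|}ᶜ = 1 - P {ω | u < |X 0 ω|} := by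
      rw [measure_compl hmeasTail (measure_ne_top _ _), measure_univ]
    have hhalf0 : (2⁻¹ : ENNReal) ≤ P {ω | u < |X 0 ω|}ᶜ := by
      rw [hcompl_meas]
      have h1 : (1 : ENNReal) - 2⁻¹ ≤ 1 - P {ω | u < |X 0 ω|} :=
        tsub_le_tsub_left (le_of_lt hk) 1
      have h2 : (1 : ENNReal) - 2⁻¹ = 2⁻¹ := ENNReal.one_sub_inv_two
      rwa [h2] at h1
    have hhalf1 : (2⁻¹ : ENNReal) ≤ P {ω | X 0 ω ≤ u} := by
      refine le_trans hhalf0 (measure_mono ?_)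
      intro ω hω
      simp only [mem_compl_iff, mem_setOf_eq, not_lt] at hω
      exact le_trans (le_abs_self _) hω
    have hhalf2 : (2⁻¹ : ENNReal) ≤ P {ω | -u ≤ X 0 ω} := by
      refine le_trans hhalf0 (measure_mono ?_)
      intro ω hω
      simp only [mem_compl_iff, mem_setOf_eq, not_lt] at hω
      have h := neg_abs_le (X 0 ω)
      show -u ≤ X 0 ω
      linarith
    -- choose m
    set m : ℕ := max 1 (Nat.ceil (4 * lam)) with hm_def
    have hm1 : 1 ≤ m := le_max_left _ _
    have hm4 : 4 * lam ≤ (m : ℝ) := by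
      calc 4 * lam ≤ (Nat.ceil (4 * lam) : ℝ) := Nat.le_ceil _
        _ ≤ (m : ℝ) := by exact_mod_cast le_max_right 1 (Nat.ceil (4 * lam))
    -- eventual conditions
    have hev1 : ∀ᶠ n in atTop, 1 ≤ b n - u := by
      filter_upwards [hbtop.eventually_ge_atTop (1 + u)] with n hn
      linarith
    have hev2 : ∀ᶠ n in atTop, (m : ℝ) * u ≤ 2 * lam * b n := by
      filter_upwards [hbtop.eventually_ge_atTop ((m : ℝ) * u / (2 * lam))] with n hn
      rw [div_le_iff₀ (by positivity)] at hn
      linarith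
    have hmin0 : (0:ℝ) < min (1/8) (c / (16 * (m:ℝ))) := by
      have : (0:ℝ) < (m:ℝ) := by exact_mod_cast hm1
      exact lt_min (by norm_num) (by positivity)
    have hev3 : ∀ᶠ n in atTop,
        ((P.prod P) {p : Ω × Ω | b n - u < |X 0 p.1 - X 0 p.2|}).toReal ≤
          min (1/8) (c / (16 * (m:ℝ))) := by
      have hW : Measurable (fun p : Ω × Ω => X 0 p.1 - X 0 p.2) :=
        ((hmeas 0).comp measurable_fst).sub ((hmeas 0).comp measurable_snd)
      have haT : Tendsto (fun n => b n - u) atTop atTop := by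
        rw [tendsto_atTop]
        intro C
        filter_upwards [hbtop.eventually_ge_atTop (C + u)] with n hn
        linarith
      have := tail_small (P.prod P) hW haT
        (ε := ENNReal.ofReal (min (1/8) (c / (16 * (m:ℝ)))))
        (ENNReal.ofReal_pos.mpr hmin0)
      filter_upwards [this] with n hn
      exact ENNReal.toReal_le_of_le_ofReal (le_of_lt hmin0) (le_of_lt hn)
    -- frequently all conditions hold
    have hfreqAll := hfreq.and_eventually (hev1.and (hev2.and hev3))
    have hfreqG : ∃ᶠ n in atTop,
        ENNReal.ofReal ((c/16)^m / (16 * (Nat.factorial m : ℝ))) ≤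
          P {ω | lam * b n < |∑ i ∈ Finset.range n, X i ω - cent n|} := by
      refine hfreqAll.mono (fun n hn => ?_)
      obtain ⟨h1, h2, h3, h4⟩ := hn
      exact core_estimate P X hmeas hindep hident lam hlam cent b c u hc0 hc1 hu0
        hhalf1 hhalf2 m hm1 hm4 n (hb n) h1 h2 h3 h4
    have hlimsup := le_limsup_of_frequently_le' hfreqG
    have hδ0 : (0 : ENNReal) < ENNReal.ofReal ((c/16)^m / (16 * (Nat.factorial m : ℝ))) := by
      apply ENNReal.ofReal_pos.mpr
      have : (0:ℝ) < (Nat.factorial m : ℝ) := by exact_mod_cast Nat.factorial_pos m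
      positivity
    exact lt_of_lt_of_le hδ0 hlimsup
  refine ⟨main, ?_⟩
  intro hTIM
  have h1 := main 1 one_pos
  have h2 := (tendstoInMeasure_iff_dist.mp hTIM) 1 one_pos
  have hsub : ∀ n : ℕ, {ω | 1 * b n < |∑ i ∈ Finset.range n, X i ω - cent n|} ⊆
      {ω | 1 ≤ dist ((b n)⁻¹ * (∑ i ∈ Finset.range n, X i ω - cent n)) ((0 : Ω → ℝ) ω)} := by
    intro n ω hω
    simp only [mem_setOf_eq, Pi.zero_apply, Real.dist_eq, sub_zero] at *
    rw [one_mul] at hω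
    rw [abs_mul, abs_inv, abs_of_pos (hb n)]
    have h3 : (b n)⁻¹ * b n ≤ (b n)⁻¹ * |∑ i ∈ Finset.range n, X i ω - cent n| :=
      mul_le_mul_of_nonneg_left (le_of_lt hω) (inv_nonneg.mpr (le_of_lt (hb n)))
    rwa [inv_mul_cancel₀ (ne_of_gt (hb n))] at h3
  have hle : Filter.limsup (fun n : ℕ =>
      P {ω | 1 * b n < |∑ i ∈ Finset.range n, X i ω - cent n|}) atTop ≤
      Filter.limsup (fun n : ℕ =>
        P {ω | 1 ≤ dist ((b n)⁻¹ * (∑ i ∈ Finset.range n, X i ω - cent n))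
          ((0 : Ω → ℝ) ω)}) atTop := by
    exact limsup_le_limsup (Eventually.of_forall (fun n => measure_mono (hsub n)))
  have hzero : Filter.limsup (fun n : ℕ =>
      P {ω | 1 ≤ dist ((b n)⁻¹ * (∑ i ∈ Finset.range n, X i ω - cent n))
        ((0 : Ω → ℝ) ω)}) atTop = 0 := h2.limsup_eq
  rw [hzero] at hle
  exact absurd (lt_of_lt_of_le h1 hle) (lt_irrefl 0)
end

section
/- Let {X, X_n} be i.i.d. B-valued random variables, {b_n} increasing positive reals with b_n → ∞, S_n = Σ_{i=1}^n X_i, γ_n = n E[X·1{‖X‖ ≤ b_n}]. If there exists a constant λ ∈ (0,∞) such that lim_{n→∞} P(‖S_n − γ_n‖/b_n > λ) = 0, then lim_{n→∞} n P(‖X − X'‖ > 2λ b_n) = 0, where X' is an independent copy of X. -/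
open MeasureTheory ProbabilityTheory Set Filter
open scoped ENNReal

section Levy

variable {E : Type*} [NormedAddCommGroup E] [NormedSpace ℝ E] [MeasurableSpace E] [BorelSpace E]
  [SecondCountableTopology E]

/-- Lévy-type maximal inequality on the canonical product space, for a swap-invariant
measure on `E × E`. -/
lemma levy_max_le {n : ℕ} (κ : Measure (E × E)) [IsProbabilityMeasure κ]
    (hswap : Measure.map Prod.swap κ = κ) (t : ℝ) :
    Measure.pi (fun _ : Fin n => κ) {y | ∃ i, t < ‖(y i).1 - (y i).2‖} ≤
      2 * Measure.pi (fun _ : Fin n => κ) {y | t < ‖∑ i, ((y i).1 - (y i).2)‖} := by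
  classical
  set π : Measure (Fin n → E × E) := Measure.pi (fun _ : Fin n => κ) with hπ
  set Y : Fin n → (Fin n → E × E) → E := fun i y => (y i).1 - (y i).2 with hY
  have hYm : ∀ i, Measurable (Y i) := fun i =>
    (measurable_fst.comp (measurable_pi_apply i)).sub
      (measurable_snd.comp (measurable_pi_apply i))
  set S : (Fin n → E × E) → E := fun y => ∑ i, Y i y with hSdef
  have hSm : Measurable S := Finset.measurable_sum _ (fun i _ => hYm i)
  set G : Set (Fin n → E × E) := {y | t < ‖S y‖} with hG
  have hGm : MeasurableSet G := measurableSet_lt measurable_const hSm.norm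
  set B : Fin n → Set (Fin n → E × E) := fun k =>
    {y | t < ‖Y k y‖} ∩ ⋂ (j : Fin n), ⋂ (_ : j < k), {y | ‖Y j y‖ ≤ t} with hB
  have hBm : ∀ k, MeasurableSet (B k) := by
    intro k
    exact (measurableSet_lt measurable_const (hYm k).norm).inter
      (MeasurableSet.iInter fun j => MeasurableSet.iInter fun _ =>
        measurableSet_le (hYm j).norm measurable_const)
  have hBmem : ∀ k y, y ∈ B k ↔ t < ‖Y k y‖ ∧ ∀ j, j < k → ‖Y j y‖ ≤ t := by
    intro k y; simp [hB, Set.mem_iInter]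
  -- the flip maps
  set f : Fin n → Fin n → E × E → E × E := fun k i => if i = k then id else Prod.swap with hf
  set F : Fin n → (Fin n → E × E) → (Fin n → E × E) := fun k y i => f k i (y i) with hF
  have hFpres : ∀ k, MeasurePreserving (F k) π π := by
    intro k
    exact measurePreserving_pi _ _ (fun i => by
      by_cases h : i = k
      · simp only [hf, if_pos h]; exact MeasurePreserving.id κ
      · simp only [hf, if_neg h]; exact ⟨measurable_swap, hswap⟩)
  have hYF : ∀ k i y, ‖Y i (F k y)‖ = ‖Y i y‖ := by
    intro k i y
    by_cases h : i = k
    · simp [hF, hf, h, hY]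
    · simp [hF, hf, h, hY, Prod.swap, norm_sub_rev]
  have hSF : ∀ k y, S y + S (F k y) = Y k y + Y k y := by
    intro k y
    rw [hSdef]
    simp only
    rw [← Finset.sum_add_distrib]
    rw [Finset.sum_eq_single k]
    · simp [hF, hf, hY]
    · intro i _ hik
      simp only [hF, hf, if_neg hik, hY, Prod.swap]
      abel
    · intro h; exact absurd (Finset.mem_univ k) h
  -- B k is invariant and key inequality
  have hkey : ∀ k, π (B k) ≤ 2 * π (B k ∩ G) := by
    intro k
    have hsub : B k ⊆ (B k ∩ G) ∪ (F k ⁻¹' (B k ∩ G)) := by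
      intro y hy
      rcases (hBmem k y).1 hy with ⟨h1, h2⟩
      have hFy : F k y ∈ B k := by
        rw [hBmem]
        constructor
        · rw [hYF]; exact h1
        · intro j hj; rw [hYF]; exact h2 j hj
      have halt : t < ‖S y‖ ∨ t < ‖S (F k y)‖ := by
        by_contra hcon
        push_neg at hcon
        have := norm_add_le (S y) (S (F k y))
        rw [hSF k y] at this
        have h2Y : ‖Y k y + Y k y‖ = 2 * ‖Y k y‖ := by
          rw [← two_smul ℝ, norm_smul]; simp
        rw [h2Y] at this
        linarith [hcon.1, hcon.2]
      rcases halt with h | h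
      · exact Or.inl ⟨hy, h⟩
      · exact Or.inr ⟨hFy, h⟩
    calc π (B k) ≤ π ((B k ∩ G) ∪ (F k ⁻¹' (B k ∩ G))) := measure_mono hsub
      _ ≤ π (B k ∩ G) + π (F k ⁻¹' (B k ∩ G)) := measure_union_le _ _
      _ = π (B k ∩ G) + π (B k ∩ G) := by
          rw [(hFpres k).measure_preimage ((hBm k).inter hGm).nullMeasurableSet]
      _ = 2 * π (B k ∩ G) := (two_mul _).symm
  -- disjointness
  have hdisj : Pairwise (Function.onFun Disjoint fun k => B k ∩ G) := by
    intro k l hkl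
    have : ∀ (k l : Fin n), k < l → Disjoint (B k ∩ G) (B l ∩ G) := by
      intro k l hlt
      rw [Set.disjoint_left]
      rintro y ⟨hyk, _⟩ ⟨hyl, _⟩
      have h1 := ((hBmem k y).1 hyk).1
      have h2 := ((hBmem l y).1 hyl).2 k hlt
      linarith
    rcases lt_or_gt_of_ne hkl with h | h
    · exact this k l h
    · exact (this l k h).symm
  -- cover
  have hcover : {y | ∃ i, t < ‖(y i).1 - (y i).2‖} ⊆ ⋃ k, B k := by
    intro y hy
    obtain ⟨i, hi⟩ := hy
    have hne : (Finset.univ.filter (fun i : Fin n => t < ‖Y i y‖)).Nonempty :=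
      ⟨i, by simp [hY, hi]⟩
    obtain ⟨k, hk, hmin⟩ := Finset.exists_min_image _ id hne
    simp only [Finset.mem_filter, Finset.mem_univ, true_and] at hk
    refine Set.mem_iUnion.2 ⟨k, (hBmem k y).2 ⟨hk, ?_⟩⟩
    intro j hj
    by_contra hcon
    push_neg at hcon
    have hjmem : j ∈ Finset.univ.filter (fun i : Fin n => t < ‖Y i y‖) := by
      simp [hcon]
    exact absurd (hmin j hjmem) (by simpa using hj)
  calc π {y | ∃ i, t < ‖(y i).1 - (y i).2‖} ≤ π (⋃ k, B k) := measure_mono hcover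
    _ ≤ ∑ k, π (B k) := measure_iUnion_fintype_le _ _
    _ ≤ ∑ k, 2 * π (B k ∩ G) := Finset.sum_le_sum (fun k _ => hkey k)
    _ = 2 * ∑ k, π (B k ∩ G) := by rw [Finset.mul_sum]
    _ = 2 * π (⋃ k, (B k ∩ G)) := by
        rw [measure_iUnion hdisj (fun k => (hBm k).inter hGm), tsum_fintype]
    _ ≤ 2 * π G := by
        gcongr
        exact Set.iUnion_subset fun k => Set.inter_subset_right

end Levy

section JointLaw

variable {Ω : Type*} [MeasurableSpace Ω] {E : Type*} [MeasurableSpace E]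

lemma joint_law_pi (P : Measure Ω) [IsProbabilityMeasure P]
    (X X' : ℕ → Ω → E)
    (hmeas : ∀ i, Measurable (X i)) (hmeas' : ∀ i, Measurable (X' i))
    (hindep : iIndepFun (Sum.elim X X') P)
    (hident : ∀ i : ℕ ⊕ ℕ, Measure.map (Sum.elim X X' i) P = Measure.map (X 0) P)
    (n : ℕ) :
    P.map (fun ω (i : Fin n) => (X i ω, X' i ω)) =
      Measure.pi (fun _ : Fin n => (P.map (X 0)).prod (P.map (X 0))) := by
  classical
  set μ := P.map (X 0) with hμdef
  haveI : IsProbabilityMeasure μ := Measure.isProbabilityMeasure_map (hmeas 0).aemeasurable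
  have hZm : Measurable (fun ω (i : Fin n) => (X i ω, X' i ω)) :=
    measurable_pi_lambda _ (fun i => (hmeas i).prodMk (hmeas' i))
  refine (Measure.pi_eq_generateFrom (fun _ => generateFrom_prod)
    (fun _ => isPiSystem_prod) (fun _ => ⟨fun _ => univ ×ˢ univ,
      fun _ => mem_image2_of_mem MeasurableSet.univ MeasurableSet.univ,
      fun _ => by simp [Set.univ_prod_univ],
      by simp [Set.univ_prod_univ, Set.iUnion_const]⟩) ?_).symm
  intro s hs
  choose u hu v hv huv using fun i => hs i
  have hum : ∀ i, MeasurableSet (u i) := hu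
  have hvm : ∀ i, MeasurableSet (v i) := hv
  set ub : ℕ → Set E := fun m => if h : m < n then u ⟨m, h⟩ else univ with hub
  set vb : ℕ → Set E := fun m => if h : m < n then v ⟨m, h⟩ else univ with hvb
  have hubm : ∀ m, MeasurableSet (ub m) := by
    intro m; rw [hub]; dsimp only; split
    · exact hum _
    · exact MeasurableSet.univ
  have hvbm : ∀ m, MeasurableSet (vb m) := by
    intro m; rw [hvb]; dsimp only; split
    · exact hvm _
    · exact MeasurableSet.univ
  set g : ℕ ⊕ ℕ → Set Ω :=
    Sum.elim (fun m => X m ⁻¹' ub m) (fun m => X' m ⁻¹' vb m) with hg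
  set T : Finset (ℕ ⊕ ℕ) := (Finset.range n).disjSum (Finset.range n) with hT
  have hsm : ∀ i, MeasurableSet (s i) := fun i => by
    rw [← huv i]; exact (hum i).prod (hvm i)
  have hpre : (fun ω (i : Fin n) => (X i ω, X' i ω)) ⁻¹' (univ.pi s) = ⋂ j ∈ T, g j := by
    ext ω
    simp only [Set.mem_preimage, Set.mem_univ_pi, Set.mem_iInter]
    constructor
    · rintro h (m | m) hm
      · simp only [hT, Finset.inl_mem_disjSum, Finset.mem_range] at hm
        have h1 := h ⟨m, hm⟩
        rw [← huv ⟨m, hm⟩] at h1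
        simp only [hg, Sum.elim_inl, Set.mem_preimage, hub, dif_pos hm]
        exact h1.1
      · simp only [hT, Finset.inr_mem_disjSum, Finset.mem_range] at hm
        have h1 := h ⟨m, hm⟩
        rw [← huv ⟨m, hm⟩] at h1
        simp only [hg, Sum.elim_inr, Set.mem_preimage, hvb, dif_pos hm]
        exact h1.2
    · intro h i
      have h1 := h (Sum.inl i.1) (by simp [hT, Finset.mem_range, i.isLt])
      have h2 := h (Sum.inr i.1) (by simp [hT, Finset.mem_range, i.isLt])
      rw [← huv i]
      constructor
      · simpa [hg, hub, dif_pos i.isLt] using h1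
      · simpa [hg, hvb, dif_pos i.isLt] using h2
  rw [Measure.map_apply hZm (MeasurableSet.univ_pi hsm), hpre,
    hindep.meas_biInter (fun j hj => ?_), Finset.prod_disjSum]
  swap
  · rcases j with m | m
    · exact ⟨ub m, hubm m, rfl⟩
    · exact ⟨vb m, hvbm m, rfl⟩
  have hXa : ∀ m, P (X m ⁻¹' ub m) = μ (ub m) := by
    intro m
    rw [← hident (Sum.inl m)]
    simp only [Sum.elim_inl]
    rw [Measure.map_apply (hmeas m) (hubm m)]
  have hXb : ∀ m, P (X' m ⁻¹' vb m) = μ (vb m) := by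
    intro m
    rw [← hident (Sum.inr m)]
    simp only [Sum.elim_inr]
    rw [Measure.map_apply (hmeas' m) (hvbm m)]
  simp only [hg, Sum.elim_inl, Sum.elim_inr]
  rw [Finset.prod_congr rfl (fun m _ => hXa m), Finset.prod_congr rfl (fun m _ => hXb m)]
  have hR : ∀ i : Fin n, (μ.prod μ) (s i) = μ (u i) * μ (v i) := by
    intro i
    rw [← huv i, Measure.prod_prod]
  rw [Finset.prod_congr rfl (fun i _ => hR i), Finset.prod_mul_distrib]
  congr 1
  · rw [← Fin.prod_univ_eq_prod_range (fun m => μ (ub m)) n]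
    refine Finset.prod_congr rfl (fun i _ => ?_)
    simp [hub, dif_pos i.isLt]
  · rw [← Fin.prod_univ_eq_prod_range (fun m => μ (vb m)) n]
    refine Finset.prod_congr rfl (fun i _ => ?_)
    simp [hvb, dif_pos i.isLt]

end JointLaw


/-- If for some λ ∈ (0,∞), P(‖Sₙ − γₙ‖/bₙ > λ) → 0, where
γₙ = n E[X 1{‖X‖≤bₙ}], then n P(‖X − X'‖ > 2λ bₙ) → 0, where X' is an
independent copy of X. -/
theorem stmt18 {Ω : Type*} [MeasurableSpace Ω] (P : Measure Ω) [IsProbabilityMeasure P]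
    {E : Type*} [NormedAddCommGroup E] [NormedSpace ℝ E] [CompleteSpace E]
    [SecondCountableTopology E] [MeasurableSpace E] [BorelSpace E]
    (X X' : ℕ → Ω → E)
    (hmeas : ∀ i, Measurable (X i)) (hmeas' : ∀ i, Measurable (X' i))
    (hindep : iIndepFun (Sum.elim X X') P)
    (hident : ∀ i : ℕ ⊕ ℕ, Measure.map (Sum.elim X X' i) P = Measure.map (X 0) P)
    (b : ℕ → ℝ) (hb : ∀ n, 0 < b n) (hbmono : Monotone b)
    (hbtop : Tendsto b atTop atTop)
    (hInt : ∀ n : ℕ, Integrable (fun ω => if ‖X 0 ω‖ ≤ b n then X 0 ω else 0) P)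
    (lam : ℝ) (hlam : 0 < lam)
    (hconv : Tendsto (fun n : ℕ =>
      P {ω | lam * b n < ‖∑ i ∈ Finset.range n, X i ω -
        (n : ℝ) • ∫ ω', (if ‖X 0 ω'‖ ≤ b n then X 0 ω' else 0) ∂P‖})
      atTop (nhds 0)) :
    Tendsto (fun n : ℕ =>
        (n : ENNReal) * P {ω | 2 * lam * b n < ‖X 0 ω - X' 0 ω‖})
      atTop (nhds 0) := by
  classical
  haveI : IsProbabilityMeasure (P.map (X 0)) := Measure.isProbabilityMeasure_map (hmeas 0).aemeasurable
  set μ := P.map (X 0) with hμdef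
  set κ := μ.prod μ with hκdef
  haveI : IsProbabilityMeasure κ := by rw [hκdef]; infer_instance
  have hswap : Measure.map Prod.swap κ = κ := by rw [hκdef]; exact Measure.prod_swap
  set v : ℕ → E := fun n => (n : ℝ) • ∫ ω', (if ‖X 0 ω'‖ ≤ b n then X 0 ω' else 0) ∂P with hv
  set q : ℕ → ℝ≥0∞ :=
    fun n => P {ω | lam * b n < ‖∑ i ∈ Finset.range n, X i ω - v n‖} with hq
  have hconv' : Tendsto q atTop (nhds 0) := hconv
  set D : ℕ → Set (E × E) := fun n => {p | 2 * lam * b n < ‖p.1 - p.2‖} with hD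
  have hDm : ∀ n, MeasurableSet (D n) :=
    fun n => measurableSet_lt measurable_const (measurable_fst.sub measurable_snd).norm
  -- law of the pair (X 0, X' 0)
  have hX'law : P.map (X' 0) = μ := by
    have := hident (Sum.inr 0); simpa using this
  have hpairIndep : IndepFun (X 0) (X' 0) P :=
    hindep.indepFun (show (Sum.inl 0 : ℕ ⊕ ℕ) ≠ Sum.inr 0 by simp)
  have hpairlaw : P.map (fun ω => (X 0 ω, X' 0 ω)) = κ := by
    have h := (indepFun_iff_map_prod_eq_prod_map_map (hmeas 0).aemeasurable
      (hmeas' 0).aemeasurable).1 hpairIndep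
    rw [h, hX'law, hκdef, ← hμdef]
  have hp : ∀ n, P {ω | 2 * lam * b n < ‖X 0 ω - X' 0 ω‖} = κ (D n) := by
    intro n
    rw [← hpairlaw, Measure.map_apply ((hmeas 0).prodMk (hmeas' 0)) (hDm n)]
    rfl
  -- joint law of the pairs
  have hlaw : ∀ n : ℕ, P.map (fun ω (i : Fin n) => (X i ω, X' i ω)) =
      Measure.pi (fun _ : Fin n => κ) := by
    intro n
    rw [hκdef, hμdef]
    exact joint_law_pi P X X' hmeas hmeas' hindep hident n
  -- symmetrization
  have hsym : ∀ n, Measure.pi (fun _ : Fin n => κ)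
      {y | 2 * lam * b n < ‖∑ i, ((y i).1 - (y i).2)‖} ≤ 2 * q n := by
    intro n
    set A1 : Set (Fin n → E × E) := {y | lam * b n < ‖∑ i, (y i).1 - v n‖} with hA1
    set A2 : Set (Fin n → E × E) := {y | lam * b n < ‖∑ i, (y i).2 - v n‖} with hA2
    have hA1m : MeasurableSet A1 := measurableSet_lt measurable_const
      ((Finset.measurable_sum _ (fun i _ =>
        measurable_fst.comp (measurable_pi_apply i))).sub measurable_const).norm
    have hA2m : MeasurableSet A2 := measurableSet_lt measurable_const
      ((Finset.measurable_sum _ (fun i _ =>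
        measurable_snd.comp (measurable_pi_apply i))).sub measurable_const).norm
    have hsub : {y : Fin n → E × E | 2 * lam * b n < ‖∑ i, ((y i).1 - (y i).2)‖}
        ⊆ A1 ∪ A2 := by
      intro y hy
      simp only [Set.mem_setOf_eq] at hy
      by_contra hcon
      simp only [Set.mem_union, hA1, hA2, Set.mem_setOf_eq] at hcon
      push_neg at hcon
      have hid : ∑ i, ((y i).1 - (y i).2) =
          (∑ i, (y i).1 - v n) - (∑ i, (y i).2 - v n) := by
        rw [Finset.sum_sub_distrib]; abel
      rw [hid] at hy
      have hnorm := norm_sub_le (∑ i, (y i).1 - v n) (∑ i, (y i).2 - v n)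
      linarith [hcon.1, hcon.2]
    have hZm : Measurable (fun ω (i : Fin n) => (X i ω, X' i ω)) :=
      measurable_pi_lambda _ (fun i => (hmeas i).prodMk (hmeas' i))
    have hmA1 : Measure.pi (fun _ : Fin n => κ) A1 = q n := by
      rw [← hlaw n, Measure.map_apply hZm hA1m]
      have hps : (fun ω (i : Fin n) => (X i ω, X' i ω)) ⁻¹' A1 =
          {ω | lam * b n < ‖∑ i ∈ Finset.range n, X i ω - v n‖} := by
        ext ω
        simp only [Set.mem_preimage, hA1, Set.mem_setOf_eq]
        rw [Fin.sum_univ_eq_sum_range (fun i => X i ω) n]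
      rw [hps]
    have hmA2 : Measure.pi (fun _ : Fin n => κ) A2 = Measure.pi (fun _ : Fin n => κ) A1 := by
      have hW : MeasurePreserving (fun (y : Fin n → E × E) i => Prod.swap (y i))
          (Measure.pi fun _ => κ) (Measure.pi fun _ => κ) :=
        measurePreserving_pi _ _ (fun i => ⟨measurable_swap, hswap⟩)
      have hpre : (fun (y : Fin n → E × E) i => Prod.swap (y i)) ⁻¹' A1 = A2 := by
        ext y; simp [hA1, hA2, Prod.swap]
      rw [← hpre, hW.measure_preimage hA1m.nullMeasurableSet]
    calc Measure.pi (fun _ : Fin n => κ) {y | 2 * lam * b n < ‖∑ i, ((y i).1 - (y i).2)‖}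
        ≤ Measure.pi (fun _ : Fin n => κ) (A1 ∪ A2) := measure_mono hsub
      _ ≤ Measure.pi (fun _ : Fin n => κ) A1 + Measure.pi (fun _ : Fin n => κ) A2 :=
          measure_union_le _ _
      _ = q n + q n := by rw [hmA2, hmA1]
      _ = 2 * q n := (two_mul _).symm
  -- the central inequality
  have hmain : ∀ n : ℕ, 1 - (κ (D n)ᶜ) ^ n ≤ 4 * q n := by
    intro n
    have hcompl : {y : Fin n → E × E | ∃ i, 2 * lam * b n < ‖(y i).1 - (y i).2‖} =
        (univ.pi (fun _ : Fin n => (D n)ᶜ))ᶜ := by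
      ext y
      simp [hD, Set.mem_pi, not_lt]
    have h1 : Measure.pi (fun _ : Fin n => κ) ((univ.pi (fun _ : Fin n => (D n)ᶜ))ᶜ) =
        1 - (κ (D n)ᶜ) ^ n := by
      rw [prob_compl_eq_one_sub (MeasurableSet.univ_pi (fun _ => (hDm n).compl)),
        Measure.pi_pi]
      simp [Finset.prod_const]
    calc 1 - (κ (D n)ᶜ) ^ n
        = Measure.pi (fun _ : Fin n => κ)
            {y | ∃ i, 2 * lam * b n < ‖(y i).1 - (y i).2‖} := by rw [hcompl, h1]
      _ ≤ 2 * Measure.pi (fun _ : Fin n => κ)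
            {y | 2 * lam * b n < ‖∑ i, ((y i).1 - (y i).2)‖} := levy_max_le κ hswap _
      _ ≤ 2 * (2 * q n) := by gcongr; exact hsym n
      _ = 4 * q n := by ring
  -- pass to real numbers
  set r : ℕ → ℝ := fun n => (P {ω | 2 * lam * b n < ‖X 0 ω - X' 0 ω‖}).toReal with hr
  set β : ℕ → ℝ := fun n => (κ (D n)ᶜ).toReal with hβ
  have hβ0 : ∀ n, 0 ≤ β n := fun n => ENNReal.toReal_nonneg
  have hβ1 : ∀ n, β n ≤ 1 := by
    intro n
    rw [hβ]
    calc (κ (D n)ᶜ).toReal ≤ (1 : ℝ≥0∞).toReal :=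
      ENNReal.toReal_mono ENNReal.one_ne_top prob_le_one
    _ = 1 := by simp
  have hβr : ∀ n, β n = 1 - r n := by
    intro n
    rw [hβ, hr]
    dsimp only
    rw [hp n, prob_compl_eq_one_sub (hDm n),
      ENNReal.toReal_sub_of_le prob_le_one ENNReal.one_ne_top, ENNReal.toReal_one]
  have hreal : ∀ n : ℕ, 1 - (β n) ^ n ≤ 4 * (q n).toReal := by
    intro n
    have h4 : (4 : ℝ≥0∞) * q n ≠ ⊤ :=
      ENNReal.mul_ne_top (by norm_num) (lt_of_le_of_lt prob_le_one ENNReal.one_lt_top).ne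
    have hm := ENNReal.toReal_mono h4 (hmain n)
    rwa [ENNReal.toReal_sub_of_le (pow_le_one' prob_le_one n) ENNReal.one_ne_top,
      ENNReal.toReal_pow, ENNReal.toReal_mul, ENNReal.toReal_one,
      (show ((4 : ℝ≥0∞)).toReal = 4 by norm_num)] at hm
  have hq0 : Tendsto (fun n => (q n).toReal) atTop (nhds 0) := by
    have := (ENNReal.tendsto_toReal ENNReal.zero_ne_top).comp hconv'
    simpa [Function.comp_def] using this
  have h10 : Tendsto (fun n => 1 - (β n) ^ n) atTop (nhds 0) := by
    apply squeeze_zero'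
    · filter_upwards with n
      have := pow_le_one₀ (hβ0 n) (hβ1 n) (n := n)
      linarith
    · filter_upwards with n using hreal n
    · simpa using hq0.const_mul 4
  have hβpow : Tendsto (fun n => (β n) ^ n) atTop (nhds 1) := by
    have := h10.const_sub 1
    simpa using this
  have hev : ∀ᶠ n in atTop, (1 : ℝ) / 2 < (β n) ^ n :=
    hβpow.eventually (eventually_gt_nhds (by norm_num))
  have hlog : Tendsto (fun n => - Real.log ((β n) ^ n)) atTop (nhds 0) := by
    have hcont := ((Real.continuousAt_log one_ne_zero).tendsto).comp hβpow
    simp only [Function.comp, Real.log_one] at hcont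
    simpa using hcont.neg
  have hnr : Tendsto (fun n : ℕ => (n : ℝ) * r n) atTop (nhds 0) := by
    refine squeeze_zero' ?_ ?_ hlog
    · filter_upwards with n
      exact mul_nonneg (Nat.cast_nonneg n) ENNReal.toReal_nonneg
    · filter_upwards [hev, eventually_ge_atTop 1] with n h1 h2
      have hβpos : 0 < β n := by
        by_contra hc
        push_neg at hc
        have hz : β n = 0 := le_antisymm hc (hβ0 n)
        rw [hz, zero_pow (by omega)] at h1
        norm_num at h1
      have hlogle : Real.log (β n) ≤ β n - 1 := Real.log_le_sub_one_of_pos hβpos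
      rw [Real.log_pow]
      have hrn : r n = 1 - β n := by rw [hβr n]; ring
      rw [hrn]
      have hn0 : (0 : ℝ) ≤ (n : ℝ) := Nat.cast_nonneg n
      nlinarith
  have heq : ∀ n : ℕ, (n : ℝ≥0∞) * P {ω | 2 * lam * b n < ‖X 0 ω - X' 0 ω‖} =
      ENNReal.ofReal ((n : ℝ) * r n) := by
    intro n
    rw [ENNReal.ofReal_mul (Nat.cast_nonneg n), ENNReal.ofReal_natCast, hr]
    dsimp only
    rw [ENNReal.ofReal_toReal (measure_ne_top P _)]
  refine Tendsto.congr (fun n => (heq n).symm) ?_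
  have := ENNReal.tendsto_ofReal hnr
  simpa using this
end
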